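/- arXiv:0710.2326 — 6 statements merged into one kernel-verified Lean document; each statement's English description precedes it below -/
import Mathlib

section
/- Let d ≥ 1 and let a₁,…,a_d, b₁,…,b_d be complex numbers such that the a_i are pairwise distinct, the b_j are pairwise distinct, and a_i ≠ b_j for all i, j. Fix 0 ≤ m ≤ d and a subset J ⊆ {1,…,d} with |J| = m. Then ∑_{I ⊆ {1,…,d}, |I| = m} R(I,J) = 1 and also ∑_{I ⊆ {1,…,d}, |I| = m} R(J,I) = 1, where R is the resultant expression defined in the context. -/
open Finset

/-- The resultant expression `R(I,J)` for the rational functions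
`h_{IJ}(z) = ∏_{i∈I}(z−a_i)/∏_{j∈J}(z−b_j)` and `1/h_{I'J'}`. -/
noncomputable def resExpr (d : ℕ) (a b : Fin d → ℂ) (I J : Finset (Fin d)) : ℂ :=
  ((∏ i ∈ I, ∏ j' ∈ Jᶜ, (a i - b j')) * (∏ i' ∈ Iᶜ, ∏ j ∈ J, (b j - a i'))) /
    ((∏ i ∈ I, ∏ i' ∈ Iᶜ, (a i - a i')) * (∏ j ∈ J, ∏ j' ∈ Jᶜ, (b j - b j')))

section Aux

open Matrix Equiv

namespace ResAux

variable {d m : ℕ}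

/-- Monotone enumeration of a finset of `Fin d`, with junk value otherwise. -/
noncomputable def sel (hd : 0 < d) (m : ℕ) (s : Finset (Fin d)) : Fin m → Fin d :=
  fun k => if h : s.card = m then (s.orderIsoOfFin h k : Fin d) else ⟨0, hd⟩

theorem sel_eq (hd : 0 < d) {s : Finset (Fin d)} (h : s.card = m) (k : Fin m) :
    sel hd m s k = (s.orderIsoOfFin h k : Fin d) := by
  simp only [sel, dif_pos h]

theorem sel_mem (hd : 0 < d) {s : Finset (Fin d)} (h : s.card = m) (k : Fin m) :
    sel hd m s k ∈ s := by rw [sel_eq hd h]; exact (s.orderIsoOfFin h k).2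

theorem sel_injective (hd : 0 < d) {s : Finset (Fin d)} (h : s.card = m) :
    Function.Injective (sel hd m s) := by
  intro i j hij
  rw [sel_eq hd h, sel_eq hd h] at hij
  simpa using (s.orderIsoOfFin h).injective (Subtype.ext hij)

theorem sel_image (hd : 0 < d) {s : Finset (Fin d)} (h : s.card = m) :
    Finset.image (sel hd m s) univ = s := by
  apply Finset.eq_of_subset_of_card_le
  · intro x hx; obtain ⟨k, _, rfl⟩ := mem_image.1 hx; exact sel_mem hd h k
  · rw [h, card_image_of_injective _ (sel_injective hd h), card_univ, Fintype.card_fin]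

theorem prod_sel (hd : 0 < d) {s : Finset (Fin d)} (h : s.card = m) (f : Fin d → ℂ) :
    (∏ k : Fin m, f (sel hd m s k)) = ∏ i ∈ s, f i := by
  rw [← Finset.prod_coe_sort s f, ← (s.orderIsoOfFin h).toEquiv.prod_comp (fun x : s => f x)]
  exact Finset.prod_congr rfl fun k _ => by rw [sel_eq hd h]; rfl


theorem card_image_univ {f : Fin m → Fin d} (h : Function.Injective f) :
    (Finset.image f univ).card = m := by
  rw [card_image_of_injective _ h, card_univ, Fintype.card_fin]

/-- The permutation comparing an injective `f` with the monotone enumeration of its image. -/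
noncomputable def permOf (f : Fin m → Fin d) : Perm (Fin m) :=
  if h : Function.Injective f then
    Equiv.ofBijective
      (fun i => (((Finset.image f univ).orderIsoOfFin (card_image_univ h)).symm
        ⟨f i, by simp⟩ : Fin m))
      (Finite.injective_iff_bijective.1 (fun x y hxy => by
        apply h
        have := congrArg (fun z => ((((Finset.image f univ).orderIsoOfFin
          (card_image_univ h))) z : Fin d)) hxy
        simpa using this))
  else 1

theorem sel_permOf (hd : 0 < d) {f : Fin m → Fin d} (h : Function.Injective f) (i : Fin m) :
    sel hd m (Finset.image f univ) (permOf f i) = f i := by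
  rw [sel_eq hd (card_image_univ h), permOf, dif_pos h]
  simp [Equiv.ofBijective]

theorem image_sel_comp (hd : 0 < d) {s : Finset (Fin d)} (h : s.card = m) (σ : Perm (Fin m)) :
    Finset.image (sel hd m s ∘ σ) univ = s := by
  have h1 : Finset.image (⇑σ) univ = univ := by
    ext x
    simp only [Finset.mem_image, Finset.mem_univ, iff_true]
    exact ⟨σ.symm x, trivial, σ.apply_symm_apply x⟩
  rw [← Finset.image_image, h1, sel_image hd h]

theorem permOf_sel_comp (hd : 0 < d) {s : Finset (Fin d)} (h : s.card = m) (σ : Perm (Fin m)) :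
    permOf (sel hd m s ∘ σ) = σ := by
  have hinj : Function.Injective (sel hd m s ∘ σ) :=
    (sel_injective hd h).comp σ.injective
  refine Equiv.ext fun i => ?_
  apply sel_injective hd h
  have h1 := sel_permOf hd hinj i
  rwa [image_sel_comp hd h σ] at h1

theorem cauchyBinet (hd : 0 < d) (A : Matrix (Fin m) (Fin d) ℂ) (B : Matrix (Fin d) (Fin m) ℂ) :
    (A * B).det = ∑ s ∈ powersetCard m (univ : Finset (Fin d)),
      (A.submatrix id (sel hd m s)).det * (B.submatrix (sel hd m s) id).det := by
  have step1 : (A * B).det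
      = ∑ f : Fin m → Fin d, (∏ i, A i (f i)) * (B.submatrix f id).det := by
    have hrow : (A * B) = fun i => ∑ l : Fin d, A i l • B l := by
      funext i j
      simp [Matrix.mul_apply]
    have hD : (A * B).det = (Matrix.detRowAlternating :
        (Fin m → ℂ) [⋀^Fin m]→ₗ[ℂ] ℂ).toMultilinearMap (fun i => ∑ l : Fin d, A i l • B l) := by
      rw [show (A * B).det = Matrix.detRowAlternating (A * B) from rfl, hrow]; rfl
    rw [hD, (Matrix.detRowAlternating :
        (Fin m → ℂ) [⋀^Fin m]→ₗ[ℂ] ℂ).toMultilinearMap.map_sum]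
    refine Finset.sum_congr rfl fun f _ => ?_
    have := (Matrix.detRowAlternating :
        (Fin m → ℂ) [⋀^Fin m]→ₗ[ℂ] ℂ).toMultilinearMap.map_smul_univ
        (fun i => A i (f i)) (fun i => B (f i))
    simp [smul_eq_mul] at this
    exact this
  rw [step1]
  have step2 : ∑ f : Fin m → Fin d, (∏ i, A i (f i)) * (B.submatrix f id).det
      = ∑ f ∈ (univ : Finset (Fin m → Fin d)).filter (fun f => Function.Injective f),
          (∏ i, A i (f i)) * (B.submatrix f id).det := by
    refine (Finset.sum_subset (filter_subset _ _) fun f _ hf => ?_).symm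
    have : ¬ Function.Injective f := by simpa using hf
    rw [Function.Injective] at this
    push_neg at this
    obtain ⟨i, j, hfij, hij⟩ := this
    have : (B.submatrix f id).det = 0 :=
      Matrix.det_zero_of_row_eq hij (by funext k; simp [Matrix.submatrix, hfij])
    rw [this, mul_zero]
  rw [step2]
  have step3 : ∑ f ∈ (univ : Finset (Fin m → Fin d)).filter (fun f => Function.Injective f),
          (∏ i, A i (f i)) * (B.submatrix f id).det
      = ∑ p ∈ (powersetCard m (univ : Finset (Fin d))) ×ˢ (univ : Finset (Perm (Fin m))),
          (∏ i, A i ((sel hd m p.1 ∘ p.2) i)) * (B.submatrix (sel hd m p.1 ∘ p.2) id).det := by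
    refine Finset.sum_nbij' (fun f => (Finset.image f univ, permOf f))
      (fun p => sel hd m p.1 ∘ p.2) ?_ ?_ ?_ ?_ ?_
    · intro f hf
      have hinj : Function.Injective f := by simpa using hf
      simp only [Finset.mem_product, Finset.mem_powersetCard, Finset.mem_univ, and_true]
      exact ⟨Finset.subset_univ _, card_image_univ hinj⟩
    · intro p hp
      have hcard : p.1.card = m := by
        simp only [Finset.mem_product, Finset.mem_powersetCard] at hp
        exact hp.1.2
      simp only [Finset.mem_filter, Finset.mem_univ, true_and]
      exact (sel_injective hd hcard).comp p.2.injective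
    · intro f hf
      have hinj : Function.Injective f := by simpa using hf
      funext i
      exact sel_permOf hd hinj i
    · intro p hp
      have hcard : p.1.card = m := by
        simp only [Finset.mem_product, Finset.mem_powersetCard] at hp
        exact hp.1.2
      exact Prod.ext (image_sel_comp hd hcard p.2) (permOf_sel_comp hd hcard p.2)
    · intro f hf
      have hinj : Function.Injective f := by simpa using hf
      have hfun : sel hd m (Finset.image f univ) ∘ permOf f = f := funext (sel_permOf hd hinj)
      rw [hfun]
  rw [step3, Finset.sum_product]
  refine Finset.sum_congr rfl fun s hs => ?_
  have hcard : s.card = m := by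
    simp only [Finset.mem_powersetCard] at hs
    exact hs.2
  have hB : ∀ σ : Perm (Fin m), (B.submatrix (sel hd m s ∘ σ) id).det
      = ((Equiv.Perm.sign σ : ℤ) : ℂ) * (B.submatrix (sel hd m s) id).det := fun σ =>
    Matrix.det_permute σ (B.submatrix (sel hd m s) id)
  have hA : (A.submatrix id (sel hd m s)).det
      = ∑ σ : Perm (Fin m), ((Equiv.Perm.sign σ : ℤ) : ℂ) * ∏ i, A i (sel hd m s (σ i)) := by
    rw [← Matrix.det_transpose, Matrix.det_apply']
    rfl
  simp only [hB, hA, Finset.sum_mul, Finset.mul_sum]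
  refine Finset.sum_congr rfl fun σ _ => by
    simp only [Function.comp_apply]
    ring


open Polynomial in
theorem detM_key (c w : Fin m → ℂ) :
    (Matrix.of fun k k' : Fin m => ∏ l ∈ ({k}ᶜ : Finset (Fin m)), (w k' - c l)).det
      * (Matrix.vandermonde c).det
    = (∏ k : Fin m, ∏ l ∈ ({k}ᶜ : Finset (Fin m)), (c k - c l))
      * (Matrix.vandermonde w).det := by
  set Cm : Matrix (Fin m) (Fin m) ℂ :=
    Matrix.of (fun k s : Fin m =>
      (∏ l ∈ ({k}ᶜ : Finset (Fin m)), (X - C (c l))).coeff s) with hCm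
  have hfac : ∀ u : Fin m → ℂ,
      (Matrix.of fun k k' : Fin m => ∏ l ∈ ({k}ᶜ : Finset (Fin m)), (u k' - c l))
        = Cm * (Matrix.vandermonde u)ᵀ := by
    intro u
    ext k k'
    have hdeg : (∏ l ∈ ({k}ᶜ : Finset (Fin m)), (X - C (c l))).natDegree < m := by
      have h1 : (∏ l ∈ ({k}ᶜ : Finset (Fin m)), (X - C (c l))).natDegree
          = ∑ l ∈ ({k}ᶜ : Finset (Fin m)), (X - C (c l)).natDegree :=
        Polynomial.natDegree_prod _ _ (fun l _ => X_sub_C_ne_zero _)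
      have h2 : ({k}ᶜ : Finset (Fin m)).card = m - 1 := by
        rw [Finset.card_compl, Finset.card_singleton, Fintype.card_fin]
      rw [h1]
      simp only [natDegree_X_sub_C, Finset.sum_const, smul_eq_mul, mul_one, h2]
      have := k.pos
      omega
    have hev : (∏ l ∈ ({k}ᶜ : Finset (Fin m)), (u k' - c l))
        = (∏ l ∈ ({k}ᶜ : Finset (Fin m)), (X - C (c l))).eval (u k') := by
      rw [Polynomial.eval_prod]
      exact Finset.prod_congr rfl fun l _ => by simp
    show (∏ l ∈ ({k}ᶜ : Finset (Fin m)), (u k' - c l)) = (Cm * (Matrix.vandermonde u)ᵀ) k k'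
    rw [hev, Polynomial.eval_eq_sum_range' hdeg, Matrix.mul_apply]
    have h4 : ∑ j : Fin m, Cm k j * (Matrix.vandermonde u)ᵀ j k'
        = ∑ j : Fin m, (fun i : ℕ =>
          (∏ l ∈ ({k}ᶜ : Finset (Fin m)), (X - C (c l))).coeff i * u k' ^ i) (j : ℕ) :=
      Finset.sum_congr rfl fun s _ => by simp [hCm, Matrix.vandermonde]
    rw [h4]
    exact (Fin.sum_univ_eq_sum_range _ m).symm
  have h1 : ∀ u : Fin m → ℂ,
      (Matrix.of fun k k' : Fin m => ∏ l ∈ ({k}ᶜ : Finset (Fin m)), (u k' - c l)).det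
        = Cm.det * (Matrix.vandermonde u).det := by
    intro u
    rw [hfac u, Matrix.det_mul, Matrix.det_transpose]
  have hdiag : (Matrix.of fun k k' : Fin m => ∏ l ∈ ({k}ᶜ : Finset (Fin m)), (c k' - c l))
      = Matrix.diagonal (fun k => ∏ l ∈ ({k}ᶜ : Finset (Fin m)), (c k - c l)) := by
    ext k k'
    rcases eq_or_ne k k' with rfl | hkk'
    · simp
    · have hk' : k' ∈ ({k}ᶜ : Finset (Fin m)) := by
        simp [Finset.mem_compl, Ne.symm hkk']
      rw [Matrix.diagonal_apply_ne _ hkk']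
      exact Finset.prod_eq_zero hk' (sub_self (c k'))
  have h3 : Cm.det * (Matrix.vandermonde c).det
      = ∏ k : Fin m, ∏ l ∈ ({k}ᶜ : Finset (Fin m)), (c k - c l) := by
    rw [← h1 c, hdiag, Matrix.det_diagonal]
  rw [h1 w, ← h3]
  ring

theorem prod_erase_sel (hd0 : 0 < d) {I : Finset (Fin d)} (h : I.card = m) (k : Fin m)
    (f : Fin d → ℂ) :
    ∏ i' ∈ I.erase (sel hd0 m I k), f i'
      = ∏ l ∈ ({k}ᶜ : Finset (Fin m)), f (sel hd0 m I l) := by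
  have him : Finset.image (sel hd0 m I) ({k}ᶜ : Finset (Fin m))
      = I.erase (sel hd0 m I k) := by
    rw [Finset.compl_singleton, Finset.image_erase (sel_injective hd0 h), sel_image hd0 h]
  rw [← him, Finset.prod_image (fun x _ y _ hxy => sel_injective hd0 h hxy)]


open Polynomial in
theorem sum_resExpr_eq_one (d : ℕ) (hd : 1 ≤ d) (a b : Fin d → ℂ)
    (ha : Function.Injective a) (hb : Function.Injective b)
    (hab : ∀ i j, a i ≠ b j)
    (m : ℕ) (hm : m ≤ d) (J : Finset (Fin d)) (hJ : J.card = m) :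
    (∑ I ∈ Finset.powersetCard m (Finset.univ : Finset (Fin d)), resExpr d a b I J) = 1 := by
  have hd0 : 0 < d := hd
  set β : Fin m → Fin d := sel hd0 m J with hβ
  set Q : Matrix (Fin m) (Fin d) ℂ :=
    Matrix.of (fun (k : Fin m) (i : Fin d) => a i ^ (k : ℕ) * ∏ j' ∈ Jᶜ, (a i - b j')) with hQ
  set L : Matrix (Fin d) (Fin m) ℂ :=
    Matrix.of (fun (i : Fin d) (k' : Fin m) =>
      (Lagrange.basis Finset.univ a i).eval (b (β k'))) with hL
  -- Lagrange interpolation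
  have hinterp : ∀ (P : ℂ[X]), P.degree < (d : WithBot ℕ) → ∀ x : ℂ,
      P.eval x = ∑ i : Fin d, P.eval (a i) * (Lagrange.basis Finset.univ a i).eval x := by
    intro P hdeg x
    have h0 := Lagrange.eq_interpolate (s := (Finset.univ : Finset (Fin d))) (v := a)
      (Set.injOn_of_injective ha) (by simpa using hdeg)
    conv_lhs => rw [h0]
    rw [Lagrange.interpolate_apply, Polynomial.eval_finset_sum]
    exact Finset.sum_congr rfl fun i _ => by rw [Polynomial.eval_mul, Polynomial.eval_C]
  -- basis eval formula
  have hbasis : ∀ (i : Fin d) (x : ℂ), (Lagrange.basis Finset.univ a i).eval x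
      = (∏ i' ∈ Finset.univ.erase i, (a i - a i')⁻¹)
        * ∏ i' ∈ Finset.univ.erase i, (x - a i') := by
    intro i x
    rw [Lagrange.basis, Polynomial.eval_prod, ← Finset.prod_mul_distrib]
    refine Finset.prod_congr rfl fun i' _ => ?_
    simp [Lagrange.basisDivisor]
  -- the product of Q and L
  have hQL : Q * L = Matrix.of (fun (k k' : Fin m) =>
      (∏ j' ∈ Jᶜ, (b (β k') - b j')) * (Matrix.vandermonde (b ∘ β))ᵀ k k') := by
    ext k k'
    set P : ℂ[X] := X ^ (k : ℕ) * ∏ j' ∈ Jᶜ, (X - C (b j')) with hP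
    have hPdeg : P.degree < (d : WithBot ℕ) := by
      refine lt_of_le_of_lt (Polynomial.degree_le_natDegree) ?_
      have h1 : P.natDegree ≤ (k : ℕ) + (Jᶜ).card := by
        refine le_trans (Polynomial.natDegree_mul_le) ?_
        have h2 : (∏ j' ∈ Jᶜ, (X - C (b j'))).natDegree = ∑ j' ∈ Jᶜ, (1 : ℕ) := by
          rw [Polynomial.natDegree_prod _ _ (fun l _ => X_sub_C_ne_zero _)]
          exact Finset.sum_congr rfl fun l _ => natDegree_X_sub_C _
        simp [h2, natDegree_X_pow]
      have h3 : (Jᶜ : Finset (Fin d)).card = d - m := by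
        rw [Finset.card_compl, hJ, Fintype.card_fin]
      have h4 := k.2
      have h5 : P.natDegree < d := by omega
      exact_mod_cast h5
    have hPeval : ∀ x : ℂ, P.eval x = x ^ (k : ℕ) * ∏ j' ∈ Jᶜ, (x - b j') := by
      intro x
      rw [hP, Polynomial.eval_mul, Polynomial.eval_pow, Polynomial.eval_X, Polynomial.eval_prod]
      exact congrArg _ (Finset.prod_congr rfl fun l _ => by simp)
    show ∑ i : Fin d, Q k i * L i k' = _
    have h5 : ∑ i : Fin d, Q k i * L i k'
        = ∑ i : Fin d, P.eval (a i) * (Lagrange.basis Finset.univ a i).eval (b (β k')) :=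
      Finset.sum_congr rfl fun i _ => by rw [hPeval (a i)]; rfl
    rw [h5, ← hinterp P hPdeg (b (β k')), hPeval]
    simp [Matrix.vandermonde]
    ring
  have hVw : (Matrix.vandermonde (b ∘ β)).det ≠ 0 :=
    Matrix.det_vandermonde_ne_zero_iff.mpr (hb.comp (sel_injective hd0 hJ))
  have hPJb : (∏ j ∈ J, ∏ j' ∈ Jᶜ, (b j - b j')) ≠ 0 := by
    rw [Finset.prod_ne_zero_iff]
    intro j hj
    rw [Finset.prod_ne_zero_iff]
    intro j' hj'
    exact sub_ne_zero.2 fun h => (Finset.mem_compl.1 hj') ((hb h) ▸ hj)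
  have hdetQL : (Q * L).det
      = (∏ j ∈ J, ∏ j' ∈ Jᶜ, (b j - b j')) * (Matrix.vandermonde (b ∘ β)).det := by
    rw [hQL, Matrix.det_mul_row, Matrix.det_transpose,
      prod_sel hd0 hJ (fun j => ∏ j' ∈ Jᶜ, (b j - b j'))]
  have key : ∀ I ∈ Finset.powersetCard m (Finset.univ : Finset (Fin d)),
      (Q.submatrix id (sel hd0 m I)).det * (L.submatrix (sel hd0 m I) id).det
        = resExpr d a b I J * (Q * L).det := by
    intro I hImem
    have hI : I.card = m := (Finset.mem_powersetCard.1 hImem).2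
    set α : Fin m → Fin d := sel hd0 m I with hα
    have hsplit : ∀ (k : Fin m) (x : ℂ), ∏ i' ∈ Finset.univ.erase (α k), (x - a i')
        = (∏ i' ∈ Iᶜ, (x - a i')) * ∏ l ∈ ({k}ᶜ : Finset (Fin m)), (x - a (α l)) := by
      intro k x
      have hsetdecomp : Finset.univ.erase (α k) = Iᶜ ∪ I.erase (α k) := by
        ext x'
        simp only [Finset.mem_erase, Finset.mem_univ, and_true, Finset.mem_union,
          Finset.mem_compl]
        constructor
        · intro hx'
          by_cases hxI : x' ∈ I
          · exact Or.inr ⟨hx', hxI⟩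
          · exact Or.inl hxI
        · rintro (h | h)
          · exact fun he => h (he ▸ sel_mem hd0 hI k)
          · exact h.1
      have hdisj : Disjoint (Iᶜ : Finset (Fin d)) (I.erase (α k)) :=
        Finset.disjoint_left.2 fun x' hx' hx'' =>
          (Finset.mem_compl.1 hx') (Finset.mem_of_mem_erase hx'')
      rw [hsetdecomp, Finset.prod_union hdisj, prod_erase_sel hd0 hI k (fun i' => x - a i')]
    have hdetQ : (Q.submatrix id α).det
        = (∏ i ∈ I, ∏ j' ∈ Jᶜ, (a i - b j')) * (Matrix.vandermonde (fun k => a (α k))).det := by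
      have h1 : Q.submatrix id α = Matrix.of (fun (k k'' : Fin m) =>
          (∏ j' ∈ Jᶜ, (a (α k'') - b j')) * (Matrix.vandermonde (fun k => a (α k)))ᵀ k k'') := by
        ext k k''
        show a (α k'') ^ (k : ℕ) * _ = _
        simp only [Matrix.of_apply, Matrix.transpose_apply, Matrix.vandermonde_apply]
        ring
      rw [h1, Matrix.det_mul_row, Matrix.det_transpose,
        prod_sel hd0 hI (fun i => ∏ j' ∈ Jᶜ, (a i - b j'))]
    set M : Matrix (Fin m) (Fin m) ℂ :=
      Matrix.of (fun (k k' : Fin m) =>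
        ∏ l ∈ ({k}ᶜ : Finset (Fin m)), (b (β k') - a (α l))) with hM
    have hdetL : (L.submatrix α id).det
        = (∏ k : Fin m, (∏ i' ∈ Finset.univ.erase (α k), (a (α k) - a i'))⁻¹)
          * ((∏ k' : Fin m, ∏ i' ∈ Iᶜ, (b (β k') - a i')) * M.det) := by
      have h1 : L.submatrix α id = Matrix.of (fun (k k' : Fin m) =>
          (∏ i' ∈ Finset.univ.erase (α k), (a (α k) - a i'))⁻¹
            * (Matrix.of (fun (k k' : Fin m) =>
                (∏ i' ∈ Iᶜ, (b (β k') - a i')) * M k k') k k')) := by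
        ext k k'
        show (Lagrange.basis Finset.univ a (α k)).eval (b (β k')) = _
        rw [hbasis (α k) (b (β k')), hsplit k (b (β k'))]
        simp only [Matrix.of_apply, hM, Finset.prod_inv_distrib]
      rw [h1, Matrix.det_mul_column, Matrix.det_mul_row]
    have hMkey := detM_key (fun k => a (α k)) (fun k' => b (β k'))
    have hMkey' : M.det * (Matrix.vandermonde (fun k => a (α k))).det
        = (∏ k : Fin m, ∏ l ∈ ({k}ᶜ : Finset (Fin m)), (a (α k) - a (α l)))
          * (Matrix.vandermonde (fun k' => b (β k'))).det := hMkey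
    have hDprod : (∏ k : Fin m, ∏ i' ∈ Finset.univ.erase (α k), (a (α k) - a i'))
        = (∏ i ∈ I, ∏ i' ∈ Iᶜ, (a i - a i'))
          * ∏ k : Fin m, ∏ l ∈ ({k}ᶜ : Finset (Fin m)), (a (α k) - a (α l)) := by
      rw [Finset.prod_congr rfl (fun k _ => hsplit k (a (α k))), Finset.prod_mul_distrib,
        prod_sel hd0 hI (fun i => ∏ i' ∈ Iᶜ, (a i - a i'))]
    have hCross : (∏ k' : Fin m, ∏ i' ∈ Iᶜ, (b (β k') - a i'))
        = ∏ i' ∈ Iᶜ, ∏ j ∈ J, (b j - a i') := by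
      rw [prod_sel hd0 hJ (fun j => ∏ i' ∈ Iᶜ, (b j - a i')), Finset.prod_comm]
    have hPI : (∏ i ∈ I, ∏ i' ∈ Iᶜ, (a i - a i')) ≠ 0 := by
      rw [Finset.prod_ne_zero_iff]
      intro i hi
      rw [Finset.prod_ne_zero_iff]
      intro i' hi'
      exact sub_ne_zero.2 fun h => (Finset.mem_compl.1 hi') ((ha h) ▸ hi)
    have hG : (∏ k : Fin m, ∏ l ∈ ({k}ᶜ : Finset (Fin m)), (a (α k) - a (α l))) ≠ 0 := by
      rw [Finset.prod_ne_zero_iff]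
      intro k _
      rw [Finset.prod_ne_zero_iff]
      intro l hl
      have hlk : l ≠ k := by simpa using hl
      exact sub_ne_zero.2 fun h => hlk (sel_injective hd0 hI (ha h)).symm
    have hVb : (Matrix.vandermonde (fun k' => b (β k'))).det = (Matrix.vandermonde (b ∘ β)).det := rfl
    rw [hdetQ, hdetL, hdetQL, Finset.prod_inv_distrib, hDprod, hCross]
    rw [hVb] at hMkey'
    simp only [resExpr]
    field_simp
    linear_combination ((∏ i ∈ I, ∏ j' ∈ Jᶜ, (a i - b j'))
      * (∏ i' ∈ Iᶜ, ∏ j ∈ J, (b j - a i'))) * hMkey'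
  have hCB := cauchyBinet hd0 Q L
  rw [Finset.sum_congr rfl key, ← Finset.sum_mul] at hCB
  have hQL0 : (Q * L).det ≠ 0 := by
    rw [hdetQL]; exact mul_ne_zero hPJb hVw
  have h1 : (∑ I ∈ Finset.powersetCard m (Finset.univ : Finset (Fin d)), resExpr d a b I J)
      * (Q * L).det = 1 * (Q * L).det := by rw [one_mul, ← hCB]
  exact mul_right_cancel₀ hQL0 h1


theorem resExpr_swap (d : ℕ) (a b : Fin d → ℂ) (I J : Finset (Fin d)) :
    resExpr d a b J I = resExpr d b a I J := by
  unfold resExpr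
  have h1 : (∏ i ∈ J, ∏ j' ∈ Iᶜ, (a i - b j')) = ∏ i' ∈ Iᶜ, ∏ j ∈ J, (a j - b i') :=
    Finset.prod_comm
  have h2 : (∏ i' ∈ Jᶜ, ∏ j ∈ I, (b j - a i')) = ∏ i ∈ I, ∏ j' ∈ Jᶜ, (b i - a j') :=
    Finset.prod_comm
  rw [h1, h2]
  ring

end ResAux

end Aux

/-- Resultant identities: for fixed `J` of cardinality `m`,
`∑_{|I|=m} R(I,J) = 1` and `∑_{|I|=m} R(J,I) = 1`. -/
theorem resultant_identities (d : ℕ) (hd : 1 ≤ d) (a b : Fin d → ℂ)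
    (ha : Function.Injective a) (hb : Function.Injective b)
    (hab : ∀ i j, a i ≠ b j)
    (m : ℕ) (hm : m ≤ d) (J : Finset (Fin d)) (hJ : J.card = m) :
    (∑ I ∈ Finset.powersetCard m (Finset.univ : Finset (Fin d)), resExpr d a b I J) = 1 ∧
    (∑ I ∈ Finset.powersetCard m (Finset.univ : Finset (Fin d)), resExpr d a b J I) = 1 := by
  constructor
  · exact ResAux.sum_resExpr_eq_one d hd a b ha hb hab m hm J hJ
  · have h := ResAux.sum_resExpr_eq_one d hd b a hb ha (fun i j => (hab j i).symm) m hm J hJ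
    rw [Finset.sum_congr rfl fun I _ => ResAux.resExpr_swap d a b I J]
    exact h
end

section
/- Let d ≥ 2 and let a₁,…,a_d, b₁,…,b_d be complex numbers such that a_i − a_{i'} is not an integer multiple of π for i ≠ i', b_j − b_{j'} is not an integer multiple of π for j ≠ j', and a_i − b_j is not an integer multiple of π for all i, j. Fix 0 ≤ m ≤ d and a subset J ⊆ {1,…,d} with |J| = m. Then ∑_{I ⊆ {1,…,d}, |I| = m} (∏_{i∈I} ∏_{j'∉J} sin(a_i − b_{j'}) · ∏_{i'∉I} ∏_{j∈J} sin(b_j − a_{i'})) / (∏_{i∈I} ∏_{i'∉I} sin(a_i − a_{i'}) · ∏_{j∈J} ∏_{j'∉J} sin(b_j − b_{j'})) = 1, where sin is the complex sine function. -/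
open Finset Polynomial

namespace TrigRes

variable {n : ℕ}

variable {n : ℕ}

noncomputable def S (m : ℕ) (G H : Polynomial ℂ) (x : Fin n → ℂ) : ℂ :=
  ∑ I ∈ powersetCard m (univ : Finset (Fin n)),
    ((∏ i ∈ I, G.eval (x i)) * ∏ i' ∈ Iᶜ, H.eval (x i')) /
      ∏ i ∈ I, ∏ i' ∈ Iᶜ, (x i - x i')

noncomputable def wI (m : ℕ) (G H : Polynomial ℂ) (x : Fin n → ℂ) (k : Fin n)
    (I : Finset (Fin n)) : ℂ :=
  if k ∈ I then
    ((∏ i ∈ I.erase k, G.eval (x i)) * ∏ i' ∈ Iᶜ, H.eval (x i')) /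
      ∏ i ∈ I.erase k, ∏ i' ∈ Iᶜ, (x i - x i')
  else
    ((-1 : ℂ) ^ m * (∏ i ∈ I, G.eval (x i)) * ∏ i' ∈ Iᶜ.erase k, H.eval (x i')) /
      ∏ i ∈ I, ∏ i' ∈ Iᶜ.erase k, (x i - x i')

noncomputable def pI (m : ℕ) (G H : Polynomial ℂ) (x : Fin n → ℂ) (k : Fin n)
    (I : Finset (Fin n)) : Polynomial ℂ :=
  if k ∈ I then
    C (wI m G H x k I) * G * ∏ i ∈ I.erase k, (X - C (x i))
  else
    C (wI m G H x k I) * H * ∏ i' ∈ Iᶜ.erase k, (X - C (x i'))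

noncomputable def Dp (x : Fin n → ℂ) (k : Fin n) : Polynomial ℂ :=
  ∏ i ∈ univ.erase k, (X - C (x i))

noncomputable def Pp (m : ℕ) (G H : Polynomial ℂ) (x : Fin n → ℂ) (k : Fin n) : Polynomial ℂ :=
  ∑ I ∈ powersetCard m (univ : Finset (Fin n)), pI m G H x k I

theorem erase_split_mem {I : Finset (Fin n)} {k : Fin n} (hk : k ∈ I) :
    (univ.erase k : Finset (Fin n)) = Iᶜ ∪ I.erase k := by
  ext i
  simp only [Finset.mem_erase, Finset.mem_union, Finset.mem_compl, Finset.mem_univ, and_true]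
  constructor
  · intro h; by_cases hI : i ∈ I <;> tauto
  · rintro (h | ⟨h1, h2⟩)
    · exact fun he => h (he ▸ hk)
    · exact h1

theorem erase_split_not_mem {I : Finset (Fin n)} {k : Fin n} (hk : k ∉ I) :
    (univ.erase k : Finset (Fin n)) = I ∪ Iᶜ.erase k := by
  ext i
  simp only [Finset.mem_erase, Finset.mem_union, Finset.mem_compl, Finset.mem_univ, and_true]
  constructor
  · intro h; by_cases hI : i ∈ I <;> tauto
  · rintro (h | ⟨h1, h2⟩)
    · exact fun he => hk (he ▸ h)
    · exact h1

theorem key_eval (m : ℕ) (G H : Polynomial ℂ) (x : Fin n → ℂ) (hx : Function.Injective x)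
    (k : Fin n) (s : ℂ) (hs : ∀ i, i ≠ k → s ≠ x i) :
    S m G H (Function.update x k s) * (Dp x k).eval s = (Pp m G H x k).eval s := by
  rw [S, Finset.sum_mul, Pp, eval_finset_sum]
  refine Finset.sum_congr rfl fun I hI => ?_
  have hIcard : I.card = m := (Finset.mem_powersetCard.1 hI).2
  have hDeval : (Dp x k).eval s = ∏ i ∈ univ.erase k, (s - x i) := by
    rw [Dp, eval_prod]; exact Finset.prod_congr rfl fun i _ => by simp
  by_cases hk : k ∈ I
  · -- k ∈ I
    set A := ∏ i ∈ I.erase k, G.eval (x i) with hA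
    set B := ∏ i' ∈ Iᶜ, H.eval (x i') with hB
    set R := ∏ i ∈ I.erase k, ∏ i' ∈ Iᶜ, (x i - x i') with hR
    have hkc : k ∉ Iᶜ := by simp [hk]
    have h1 : ∏ i ∈ I, G.eval (Function.update x k s i) = G.eval s * A := by
      rw [← Finset.mul_prod_erase I _ hk, Function.update_self]
      congr 1
      exact Finset.prod_congr rfl fun i hi =>
        by rw [Function.update_of_ne (Finset.mem_erase.1 hi).1]
    have h2 : ∏ i' ∈ Iᶜ, H.eval (Function.update x k s i') = B := by
      exact Finset.prod_congr rfl fun i hi =>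
        by rw [Function.update_of_ne (fun he => hkc (by rwa [he] at hi))]
    have h3 : ∏ i ∈ I, ∏ i' ∈ Iᶜ, (Function.update x k s i - Function.update x k s i')
        = (∏ i' ∈ Iᶜ, (s - x i')) * R := by
      rw [← Finset.mul_prod_erase I _ hk]
      congr 1
      · exact Finset.prod_congr rfl fun i' hi' => by
          rw [Function.update_self, Function.update_of_ne (fun he => hkc (by rwa [he] at hi'))]
      · exact Finset.prod_congr rfl fun i hi => Finset.prod_congr rfl fun i' hi' => by
          rw [Function.update_of_ne (Finset.mem_erase.1 hi).1,
            Function.update_of_ne (fun he => hkc (by rwa [he] at hi'))]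
    have hdisj : Disjoint (Iᶜ : Finset (Fin n)) (I.erase k) :=
      Finset.disjoint_left.mpr fun i hi hI' => (Finset.mem_compl.1 hi) (Finset.erase_subset _ _ hI')
    have h4 : (Dp x k).eval s = (∏ i' ∈ Iᶜ, (s - x i')) * ∏ i ∈ I.erase k, (s - x i) := by
      rw [hDeval, erase_split_mem hk, Finset.prod_union hdisj]
    have h5 : (pI m G H x k I).eval s = wI m G H x k I * G.eval s * ∏ i ∈ I.erase k, (s - x i) := by
      rw [pI, if_pos hk]
      simp [eval_prod]
    have hQ : (∏ i' ∈ Iᶜ, (s - x i')) ≠ 0 := by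
      rw [Finset.prod_ne_zero_iff]
      intro i' hi'
      exact sub_ne_zero.2 (hs i' (fun he => hkc (by rwa [he] at hi')))
    have hRne : R ≠ 0 := by
      rw [hR, Finset.prod_ne_zero_iff]
      intro i hi
      rw [Finset.prod_ne_zero_iff]
      intro i' hi'
      exact sub_ne_zero.2 (hx.ne fun he =>
        (Finset.mem_compl.1 hi') (he ▸ Finset.erase_subset _ _ hi))
    rw [h1, h2, h3, h4, h5, wI, if_pos hk, ← hA, ← hB, ← hR]
    field_simp
  · -- k ∉ I
    set A := ∏ i ∈ I, G.eval (x i) with hA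
    set B := ∏ i' ∈ Iᶜ.erase k, H.eval (x i') with hB
    set R := ∏ i ∈ I, ∏ i' ∈ Iᶜ.erase k, (x i - x i') with hR
    have hkc : k ∈ Iᶜ := by simp [hk]
    have h1 : ∏ i ∈ I, G.eval (Function.update x k s i) = A := by
      exact Finset.prod_congr rfl fun i hi =>
        by rw [Function.update_of_ne (fun he => hk (by rwa [he] at hi))]
    have h2 : ∏ i' ∈ Iᶜ, H.eval (Function.update x k s i') = H.eval s * B := by
      rw [← Finset.mul_prod_erase Iᶜ _ hkc, Function.update_self]
      congr 1
      exact Finset.prod_congr rfl fun i hi =>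
        by rw [Function.update_of_ne (Finset.mem_erase.1 hi).1]
    have h3 : ∏ i ∈ I, ∏ i' ∈ Iᶜ, (Function.update x k s i - Function.update x k s i')
        = (∏ i ∈ I, (x i - s)) * R := by
      rw [← Finset.prod_mul_distrib]
      refine Finset.prod_congr rfl fun i hi => ?_
      rw [← Finset.mul_prod_erase Iᶜ _ hkc, Function.update_self,
        Function.update_of_ne (fun he => hk (by rwa [he] at hi))]
      congr 1
      exact Finset.prod_congr rfl fun i' hi' => by
        rw [Function.update_of_ne (Finset.mem_erase.1 hi').1]
    have hdisj : Disjoint I (Iᶜ.erase k) :=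
      Finset.disjoint_left.mpr fun i hi hI' =>
        (Finset.mem_compl.1 (Finset.erase_subset _ _ hI')) hi
    have h4 : (Dp x k).eval s = (∏ i ∈ I, (s - x i)) * ∏ i' ∈ Iᶜ.erase k, (s - x i') := by
      rw [hDeval, erase_split_not_mem hk, Finset.prod_union hdisj]
    have h5 : (pI m G H x k I).eval s
        = wI m G H x k I * H.eval s * ∏ i' ∈ Iᶜ.erase k, (s - x i') := by
      rw [pI, if_neg hk]
      simp [eval_prod]
    have h6 : ∏ i ∈ I, (s - x i) = (-1 : ℂ) ^ m * ∏ i ∈ I, (x i - s) := by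
      rw [← hIcard, ← Finset.prod_const, ← Finset.prod_mul_distrib]
      exact Finset.prod_congr rfl fun i _ => by ring
    have hP : (∏ i ∈ I, (x i - s)) ≠ 0 := by
      rw [Finset.prod_ne_zero_iff]
      intro i hi
      exact sub_ne_zero.2 (fun he => (hs i (fun hik => hk (by rwa [hik] at hi))) he.symm)
    have hRne : R ≠ 0 := by
      rw [hR, Finset.prod_ne_zero_iff]
      intro i hi
      rw [Finset.prod_ne_zero_iff]
      intro i' hi'
      exact sub_ne_zero.2 (hx.ne fun he =>
        (Finset.mem_compl.1 (Finset.erase_subset _ _ hi')) (by rwa [he] at hi))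
    rw [h1, h2, h3, h4, h5, h6, wI, if_neg hk, ← hA, ← hB, ← hR]
    field_simp


theorem main_pair (m : ℕ) (G H : Polynomial ℂ) (x : Fin n → ℂ)
    (hx : Function.Injective x) (k l : Fin n) (hlk : l ≠ k)
    (I : Finset (Fin n)) (hIcard : I.card = m) (hk : k ∈ I) (hl : l ∉ I) :
    (pI m G H x k I).eval (x l) + (pI m G H x k (insert l (I.erase k))).eval (x l) = 0 := by
  have hkl : k ≠ l := fun h => hlk h.symm
  have hlK : l ∉ I.erase k := fun h => hl (Finset.erase_subset _ _ h)
  have hkI' : k ∉ insert l (I.erase k) := by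
    rw [Finset.mem_insert]
    rintro (h | h)
    · exact hkl h
    · exact Finset.notMem_erase _ _ h
  have hlIc : l ∈ Iᶜ := Finset.mem_compl.2 hl
  have hI'c : (insert l (I.erase k))ᶜ.erase k = Iᶜ.erase l := by
    ext i
    simp only [Finset.mem_erase, Finset.mem_compl, Finset.mem_insert, not_or]
    constructor
    · rintro ⟨hik, hil, hiK⟩
      exact ⟨hil, fun hiI => hiK ⟨hik, hiI⟩⟩
    · rintro ⟨hil, hiI⟩
      exact ⟨fun he => hiI (by rwa [he]), hil, fun h => hiI h.2⟩
  have hm1 : 1 ≤ m := hIcard ▸ Finset.card_pos.2 ⟨k, hk⟩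
  have hKcard : (I.erase k).card = m - 1 := by rw [Finset.card_erase_of_mem hk, hIcard]
  -- nonvanishing
  have hR : (∏ i ∈ I.erase k, ∏ i' ∈ Iᶜ.erase l, (x i - x i')) ≠ 0 := by
    rw [Finset.prod_ne_zero_iff]
    intro i hi
    rw [Finset.prod_ne_zero_iff]
    intro i' hi'
    have hiI : i ∈ I := Finset.erase_subset _ _ hi
    have hi'I : i' ∉ I := Finset.mem_compl.1 (Finset.erase_subset _ _ hi')
    exact sub_ne_zero.2 (hx.ne fun he => hi'I (by rwa [he] at hiI))
  have hKl : (∏ i ∈ I.erase k, (x i - x l)) ≠ 0 := by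
    rw [Finset.prod_ne_zero_iff]
    intro i hi
    have hiI : i ∈ I := Finset.erase_subset _ _ hi
    exact sub_ne_zero.2 (hx.ne fun he => hl (by rwa [he] at hiI))
  have hCl : (∏ i' ∈ Iᶜ.erase l, (x l - x i')) ≠ 0 := by
    rw [Finset.prod_ne_zero_iff]
    intro i' hi'
    exact sub_ne_zero.2 (hx.ne (Ne.symm (Finset.mem_erase.1 hi').1))
  -- evaluations
  have e1 : (pI m G H x k I).eval (x l) =
      (((∏ i ∈ I.erase k, G.eval (x i)) * ∏ i' ∈ Iᶜ, H.eval (x i')) /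
        ∏ i ∈ I.erase k, ∏ i' ∈ Iᶜ, (x i - x i')) * G.eval (x l) *
        ∏ i ∈ I.erase k, (x l - x i) := by
    rw [pI, if_pos hk, wI, if_pos hk]
    simp [eval_prod]
  have e4 : (pI m G H x k (insert l (I.erase k))).eval (x l) =
      (((-1 : ℂ) ^ m * (∏ i ∈ insert l (I.erase k), G.eval (x i)) *
          ∏ i' ∈ Iᶜ.erase l, H.eval (x i')) /
        ∏ i ∈ insert l (I.erase k), ∏ i' ∈ Iᶜ.erase l, (x i - x i')) * H.eval (x l) *
        ∏ i' ∈ Iᶜ.erase l, (x l - x i') := by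
    rw [pI, if_neg hkI', wI, if_neg hkI', hI'c]
    simp [eval_prod]
  have e2 : ∏ i' ∈ Iᶜ, H.eval (x i') =
      H.eval (x l) * ∏ i' ∈ Iᶜ.erase l, H.eval (x i') :=
    (Finset.mul_prod_erase _ _ hlIc).symm
  have e3 : ∏ i ∈ I.erase k, ∏ i' ∈ Iᶜ, (x i - x i')
      = (∏ i ∈ I.erase k, (x i - x l)) * ∏ i ∈ I.erase k, ∏ i' ∈ Iᶜ.erase l, (x i - x i') := by
    rw [← Finset.prod_mul_distrib]
    exact Finset.prod_congr rfl fun i hi => (Finset.mul_prod_erase _ _ hlIc).symm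
  have e5 : ∏ i ∈ insert l (I.erase k), G.eval (x i)
      = G.eval (x l) * ∏ i ∈ I.erase k, G.eval (x i) := Finset.prod_insert hlK
  have e7 : ∏ i ∈ insert l (I.erase k), ∏ i' ∈ Iᶜ.erase l, (x i - x i')
      = (∏ i' ∈ Iᶜ.erase l, (x l - x i')) *
        ∏ i ∈ I.erase k, ∏ i' ∈ Iᶜ.erase l, (x i - x i') := Finset.prod_insert hlK
  have e8 : ∏ i ∈ I.erase k, (x l - x i)
      = (-1 : ℂ) ^ (m - 1) * ∏ i ∈ I.erase k, (x i - x l) := by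
    rw [← hKcard, ← Finset.prod_const, ← Finset.prod_mul_distrib]
    exact Finset.prod_congr rfl fun i _ => by ring
  have e9 : (-1 : ℂ) ^ m = -((-1 : ℂ) ^ (m - 1)) := by
    conv_lhs => rw [show m = (m - 1) + 1 from (Nat.succ_pred_eq_of_pos hm1).symm]
    rw [pow_succ]; ring
  rw [e1, e4, e2, e3, e5, e7, e8, e9]
  field_simp
  ring


theorem Pp_eval_eq_zero (m : ℕ) (G H : Polynomial ℂ) (x : Fin n → ℂ)
    (hx : Function.Injective x) (k l : Fin n) (hlk : l ≠ k) :
    (Pp m G H x k).eval (x l) = 0 := by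
  have hkl : k ≠ l := fun h => hlk h.symm
  rw [Pp, eval_finset_sum]
  have hz1 : ∀ I : Finset (Fin n), k ∈ I → l ∈ I → (pI m G H x k I).eval (x l) = 0 := by
    intro I hk' hl'
    rw [pI, if_pos hk', eval_mul, eval_prod,
      Finset.prod_eq_zero (Finset.mem_erase.2 ⟨hlk, hl'⟩) (by simp), mul_zero]
  have hz2 : ∀ I : Finset (Fin n), k ∉ I → l ∉ I → (pI m G H x k I).eval (x l) = 0 := by
    intro I hk' hl'
    rw [pI, if_neg hk', eval_mul, eval_prod,
      Finset.prod_eq_zero (Finset.mem_erase.2 ⟨hlk, Finset.mem_compl.2 hl'⟩) (by simp), mul_zero]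
  have cardfact : ∀ (I : Finset (Fin n)) (u v : Fin n), u ∈ I → v ∉ I →
      (insert v (I.erase u)).card = I.card := by
    intro I u v hu hv
    rw [Finset.card_insert_of_notMem (fun h => hv (Finset.erase_subset _ _ h)),
      Finset.card_erase_of_mem hu]
    have : 1 ≤ I.card := Finset.card_pos.2 ⟨u, hu⟩
    omega
  have insfact : ∀ (I : Finset (Fin n)) (u v : Fin n), u ∈ I → v ∉ I →
      insert u ((insert v (I.erase u)).erase v) = I := by
    intro I u v hu hv
    rw [Finset.erase_insert (fun h => hv (Finset.erase_subset _ _ h)), Finset.insert_erase hu]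
  refine Finset.sum_involution
    (fun I _ => if k ∈ I ∧ l ∉ I then insert l (I.erase k)
      else if l ∈ I ∧ k ∉ I then insert k (I.erase l) else I) ?_ ?_ ?_ ?_
  · -- sums to zero
    intro I hI
    by_cases c1 : k ∈ I ∧ l ∉ I
    · rw [if_pos c1]
      exact main_pair m G H x hx k l hlk I (Finset.mem_powersetCard.1 hI).2 c1.1 c1.2
    · by_cases c2 : l ∈ I ∧ k ∉ I
      · rw [if_neg c1, if_pos c2]
        have hI2card : (insert k (I.erase l)).card = m := by
          rw [cardfact I l k c2.1 c2.2, (Finset.mem_powersetCard.1 hI).2]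
        have hknotin : l ∉ insert k (I.erase l) := by
          rw [Finset.mem_insert]
          rintro (h | h)
          · exact hlk h
          · exact Finset.notMem_erase _ _ h
        have := main_pair m G H x hx k l hlk (insert k (I.erase l)) hI2card
          (Finset.mem_insert_self _ _) hknotin
        rw [insfact I l k c2.1 c2.2] at this
        rw [add_comm]
        exact this
      · rw [if_neg c1, if_neg c2]
        have : (pI m G H x k I).eval (x l) = 0 := by
          by_cases hk' : k ∈ I
          · have hl' : l ∈ I := by tauto
            exact hz1 I hk' hl'
          · have hl' : l ∉ I := by tauto
            exact hz2 I hk' hl'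
        rw [this, add_zero]
  · -- nonzero implies moved
    intro I hI hf
    by_cases c1 : k ∈ I ∧ l ∉ I
    · rw [if_pos c1]
      intro he
      exact c1.2 (by rw [← he]; exact Finset.mem_insert_self _ _)
    · by_cases c2 : l ∈ I ∧ k ∉ I
      · rw [if_neg c1, if_pos c2]
        intro he
        exact c2.2 (by rw [← he]; exact Finset.mem_insert_self _ _)
      · exfalso
        apply hf
        by_cases hk' : k ∈ I
        · exact hz1 I hk' (by tauto)
        · exact hz2 I hk' (by tauto)
  · -- maps into the set
    intro I hI
    rw [Finset.mem_powersetCard] at hI ⊢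
    refine ⟨Finset.subset_univ _, ?_⟩
    by_cases c1 : k ∈ I ∧ l ∉ I
    · rw [if_pos c1, cardfact I k l c1.1 c1.2, hI.2]
    · by_cases c2 : l ∈ I ∧ k ∉ I
      · rw [if_neg c1, if_pos c2, cardfact I l k c2.1 c2.2, hI.2]
      · rw [if_neg c1, if_neg c2, hI.2]
  · -- involution
    intro I hI
    by_cases c1 : k ∈ I ∧ l ∉ I
    · simp only [if_pos c1]
      have h1 : ¬(k ∈ insert l (I.erase k) ∧ l ∉ insert l (I.erase k)) := by
        rintro ⟨-, h⟩
        exact h (Finset.mem_insert_self _ _)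
      have h2 : l ∈ insert l (I.erase k) ∧ k ∉ insert l (I.erase k) := by
        refine ⟨Finset.mem_insert_self _ _, ?_⟩
        rw [Finset.mem_insert]
        rintro (h | h)
        · exact hkl h
        · exact Finset.notMem_erase _ _ h
      rw [if_neg h1, if_pos h2, insfact I k l c1.1 c1.2]
    · by_cases c2 : l ∈ I ∧ k ∉ I
      · simp only [if_neg c1, if_pos c2]
        have h1 : k ∈ insert k (I.erase l) ∧ l ∉ insert k (I.erase l) := by
          refine ⟨Finset.mem_insert_self _ _, ?_⟩
          rw [Finset.mem_insert]
          rintro (h | h)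
          · exact hlk h
          · exact Finset.notMem_erase _ _ h
        rw [if_pos h1, insfact I l k c2.1 c2.2]
      · simp only [if_neg c1, if_neg c2]


theorem Pp_natDegree_le (m : ℕ) (hmn : m ≤ n) (G H : Polynomial ℂ)
    (hG : G.natDegree ≤ n - m) (hH : H.natDegree ≤ m) (x : Fin n → ℂ) (k : Fin n) :
    (Pp m G H x k).natDegree ≤ n - 1 := by
  rw [Pp]
  apply Polynomial.natDegree_sum_le_of_forall_le
  intro I hI
  have hIcard : I.card = m := (Finset.mem_powersetCard.1 hI).2
  have hprodle : ∀ (s : Finset (Fin n)), (∏ i ∈ s, (X - C (x i))).natDegree ≤ s.card := by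
    intro s
    refine (Polynomial.natDegree_prod_le _ _).trans ?_
    simp [Polynomial.natDegree_X_sub_C]
  rw [pI]
  by_cases hk : k ∈ I
  · rw [if_pos hk]
    refine (Polynomial.natDegree_mul_le).trans ?_
    have h1 : (C (wI m G H x k I) * G).natDegree ≤ n - m := (natDegree_C_mul_le _ _).trans hG
    have h2 := (hprodle (I.erase k)).trans_eq (by rw [Finset.card_erase_of_mem hk, hIcard])
    have hm1 : 1 ≤ m := hIcard ▸ Finset.card_pos.2 ⟨k, hk⟩
    omega
  · rw [if_neg hk]
    refine (Polynomial.natDegree_mul_le).trans ?_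
    have h1 : (C (wI m G H x k I) * H).natDegree ≤ m := (natDegree_C_mul_le _ _).trans hH
    have hkc : k ∈ Iᶜ := Finset.mem_compl.2 hk
    have hcc : (Iᶜ : Finset (Fin n)).card = n - m := by
      rw [Finset.card_compl, hIcard, Fintype.card_fin]
    have h2 := (hprodle (Iᶜ.erase k)).trans_eq (by rw [Finset.card_erase_of_mem hkc, hcc])
    have hm1 : 1 ≤ n - m := hcc ▸ Finset.card_pos.2 ⟨k, hkc⟩
    omega

theorem S_update (m : ℕ) (hmn : m ≤ n) (G H : Polynomial ℂ)
    (hG : G.natDegree ≤ n - m) (hH : H.natDegree ≤ m)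
    (x : Fin n → ℂ) (hx : Function.Injective x) (k : Fin n) (t : ℂ)
    (ht : ∀ i, i ≠ k → t ≠ x i) :
    S m G H (Function.update x k t) = S m G H x := by
  have hn1 : 1 ≤ n := Nat.one_le_iff_ne_zero.2 (by rintro rfl; exact k.elim0)
  have hDeval : ∀ s : ℂ, (Dp x k).eval s = ∏ i ∈ univ.erase k, (s - x i) := by
    intro s; rw [Dp, eval_prod]; exact Finset.prod_congr rfl fun i _ => by simp
  have hDk : (Dp x k).eval (x k) ≠ 0 := by
    rw [hDeval, Finset.prod_ne_zero_iff]
    intro i hi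
    exact sub_ne_zero.2 (hx.ne (Ne.symm (Finset.mem_erase.1 hi).1))
  have hDt : (Dp x k).eval t ≠ 0 := by
    rw [hDeval, Finset.prod_ne_zero_iff]
    intro i hi
    exact sub_ne_zero.2 (ht i (Finset.mem_erase.1 hi).1)
  have hDdeg : (Dp x k).natDegree ≤ n - 1 := by
    refine (Polynomial.natDegree_prod_le _ _).trans ?_
    simp only [Polynomial.natDegree_X_sub_C]
    rw [Finset.sum_const, smul_eq_mul, mul_one, Finset.card_erase_of_mem (Finset.mem_univ k),
      Finset.card_univ, Fintype.card_fin]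
  set F : Polynomial ℂ := C ((Dp x k).eval (x k)) * Pp m G H x k
      - C ((Pp m G H x k).eval (x k)) * Dp x k with hFdef
  have hFzero : F = 0 := by
    apply Polynomial.eq_zero_of_natDegree_lt_card_of_eval_eq_zero F hx
    · intro l
      by_cases hlk : l = k
      · subst hlk; simp [hFdef]; ring
      · have h1 : (Pp m G H x k).eval (x l) = 0 := Pp_eval_eq_zero m G H x hx k l hlk
        have h2 : (Dp x k).eval (x l) = 0 := by
          rw [hDeval]
          exact Finset.prod_eq_zero (Finset.mem_erase.2 ⟨hlk, Finset.mem_univ l⟩) (sub_self _)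
        simp [hFdef, h1, h2]
    · have : F.natDegree ≤ n - 1 := by
        refine (Polynomial.natDegree_sub_le _ _).trans (max_le ?_ ?_)
        · exact (natDegree_C_mul_le _ _).trans (Pp_natDegree_le m hmn G H hG hH x k)
        · exact (natDegree_C_mul_le _ _).trans hDdeg
      rw [Fintype.card_fin]
      omega
  have e1 := key_eval m G H x hx k t ht
  have e2 := key_eval m G H x hx k (x k) (fun i hi => hx.ne (Ne.symm hi))
  rw [Function.update_eq_self] at e2
  have e3 : (Dp x k).eval (x k) * (Pp m G H x k).eval t
      = (Pp m G H x k).eval (x k) * (Dp x k).eval t := by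
    have := congrArg (Polynomial.eval t) hFzero
    simpa [hFdef, sub_eq_zero] using this
  apply mul_right_cancel₀ hDt
  apply mul_right_cancel₀ hDk
  calc S m G H (Function.update x k t) * (Dp x k).eval t * (Dp x k).eval (x k)
      = (Dp x k).eval (x k) * (Pp m G H x k).eval t := by rw [e1]; ring
    _ = (Pp m G H x k).eval (x k) * (Dp x k).eval t := e3
    _ = (S m G H x * (Dp x k).eval (x k)) * (Dp x k).eval t := by rw [e2]
    _ = S m G H x * (Dp x k).eval t * (Dp x k).eval (x k) := by ring

theorem S_eq_of_fresh (m : ℕ) (hmn : m ≤ n) (G H : Polynomial ℂ)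
    (hG : G.natDegree ≤ n - m) (hH : H.natDegree ≤ m)
    (x z : Fin n → ℂ) (hx : Function.Injective x) (hz : Function.Injective z)
    (hdisj : ∀ i j, z i ≠ x j) :
    S m G H x = S m G H z := by
  classical
  set mix : ℕ → Fin n → ℂ := fun r i => if (i : ℕ) < r then z i else x i with hmix
  have hmix0 : mix 0 = x := by funext i; simp [hmix]
  have hmixn : mix n = z := by funext i; simp [hmix, i.isLt]
  have hmixinj : ∀ r, Function.Injective (mix r) := by
    intro r i j hij
    simp only [hmix] at hij
    by_cases hi : (i : ℕ) < r <;> by_cases hj : (j : ℕ) < r <;>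
      simp only [hi, hj, if_pos, if_neg, if_true, if_false] at hij
    · exact hz hij
    · exact absurd hij (hdisj i j)
    · exact absurd hij.symm (hdisj j i)
    · exact hx hij
  have key : ∀ r, r ≤ n → S m G H (mix r) = S m G H x := by
    intro r
    induction r with
    | zero => intro _; rw [hmix0]
    | succ r ih =>
      intro hr
      have hrn : r < n := hr
      set kr : Fin n := ⟨r, hrn⟩ with hkr
      have hupd : mix (r + 1) = Function.update (mix r) kr (z kr) := by
        funext i
        by_cases hik : i = kr
        · subst hik
          simp [hmix, Function.update_self, hkr]
        · rw [Function.update_of_ne hik]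
          have hir : (i : ℕ) ≠ r := fun h => hik (Fin.ext h)
          simp only [hmix]
          by_cases hi : (i : ℕ) < r
          · rw [if_pos hi, if_pos (by omega)]
          · rw [if_neg hi, if_neg (by omega)]
      have hts : ∀ i, i ≠ kr → z kr ≠ mix r i := by
        intro i hik
        simp only [hmix]
        by_cases hi : (i : ℕ) < r
        · rw [if_pos hi]
          exact hz.ne (fun h => hik h.symm)
        · rw [if_neg hi]
          exact hdisj kr i
      rw [hupd, S_update m hmn G H hG hH (mix r) (hmixinj r) kr (z kr) hts]
      exact ih (le_of_lt hrn)
  rw [← hmix0, ← hmixn]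
  rw [key n le_rfl, hmix0]

theorem S_eq (m : ℕ) (hmn : m ≤ n) (G H : Polynomial ℂ)
    (hG : G.natDegree ≤ n - m) (hH : H.natDegree ≤ m)
    (x y : Fin n → ℂ) (hx : Function.Injective x) (hy : Function.Injective y) :
    S m G H x = S m G H y := by
  classical
  set Bad : Set ℂ := Set.range x ∪ Set.range y with hBad
  have hBadFin : Bad.Finite := (Set.finite_range x).union (Set.finite_range y)
  obtain ⟨t, hts, htc⟩ := (hBadFin.infinite_compl).exists_subset_card_eq n
  have htcard : Fintype.card { c // c ∈ t } = n := by rw [Fintype.card_coe, htc]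
  set e := Fintype.equivFinOfCardEq htcard with he
  set w : Fin n → ℂ := fun i => (e.symm i : ℂ) with hw
  have hwinj : Function.Injective w := by
    intro i j hij
    have := Subtype.ext hij
    simpa using e.symm.injective this
  have hwmem : ∀ i, w i ∈ Badᶜ := fun i => hts (e.symm i).2
  have hwx : ∀ i j, w i ≠ x j := by
    intro i j h
    exact (hwmem i) (Or.inl ⟨j, h.symm⟩)
  have hwy : ∀ i j, w i ≠ y j := by
    intro i j h
    exact (hwmem i) (Or.inr ⟨j, h.symm⟩)
  rw [S_eq_of_fresh m hmn G H hG hH x w hx hwinj hwx,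
    ← S_eq_of_fresh m hmn G H hG hH y w hy hwinj hwy]

theorem S_special (m : ℕ) (J : Finset (Fin n)) (hJ : J.card = m)
    (y : Fin n → ℂ) (hy : Function.Injective y) :
    S m (∏ j' ∈ Jᶜ, (X - C (y j'))) (∏ j ∈ J, (C (y j) - X)) y
      = ∏ j ∈ J, ∏ j' ∈ Jᶜ, (y j - y j') := by
  have hGeval : ∀ i, (∏ j' ∈ Jᶜ, (X - C (y j'))).eval (y i) = ∏ j' ∈ Jᶜ, (y i - y j') := by
    intro i; rw [eval_prod]; exact Finset.prod_congr rfl fun j' _ => by simp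
  have hHeval : ∀ i, (∏ j ∈ J, (C (y j) - X)).eval (y i) = ∏ j ∈ J, (y j - y i) := by
    intro i; rw [eval_prod]; exact Finset.prod_congr rfl fun j _ => by simp
  have hQ : (∏ j ∈ J, ∏ j' ∈ Jᶜ, (y j - y j')) ≠ 0 := by
    rw [Finset.prod_ne_zero_iff]
    intro j hj
    rw [Finset.prod_ne_zero_iff]
    intro j' hj'
    exact sub_ne_zero.2 (hy.ne fun he => (Finset.mem_compl.1 hj') (by rwa [he] at hj))
  rw [S, Finset.sum_eq_single_of_mem J
    (Finset.mem_powersetCard.2 ⟨Finset.subset_univ _, hJ⟩)]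
  · have hA : ∏ i ∈ J, (∏ j' ∈ Jᶜ, (X - C (y j'))).eval (y i)
        = ∏ j ∈ J, ∏ j' ∈ Jᶜ, (y j - y j') := Finset.prod_congr rfl fun j _ => hGeval j
    have hB : ∏ i' ∈ Jᶜ, (∏ j ∈ J, (C (y j) - X)).eval (y i')
        = ∏ j ∈ J, ∏ j' ∈ Jᶜ, (y j - y j') :=
      (Finset.prod_congr rfl fun j' _ => hHeval j').trans Finset.prod_comm
    rw [hA, hB, mul_div_assoc, div_self hQ, mul_one]
  · intro I hI hne
    have hIcard : I.card = m := (Finset.mem_powersetCard.1 hI).2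
    have : ¬ I ⊆ J := by
      intro hsub
      exact hne (Finset.eq_of_subset_of_card_le hsub (by rw [hIcard, hJ]))
    obtain ⟨i, hiI, hiJ⟩ := Finset.not_subset.1 this
    have hzero : (∏ j' ∈ Jᶜ, (X - C (y j'))).eval (y i) = 0 := by
      rw [hGeval]
      exact Finset.prod_eq_zero (Finset.mem_compl.2 hiJ) (sub_self _)
    rw [Finset.prod_eq_zero hiI hzero, zero_mul, zero_div]

theorem core (m : ℕ) (hmn : m ≤ n) (J : Finset (Fin n)) (hJ : J.card = m)
    (x y : Fin n → ℂ) (hx : Function.Injective x) (hy : Function.Injective y) :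
    S m (∏ j' ∈ Jᶜ, (X - C (y j'))) (∏ j ∈ J, (C (y j) - X)) x
      = ∏ j ∈ J, ∏ j' ∈ Jᶜ, (y j - y j') := by
  have hG : (∏ j' ∈ Jᶜ, (X - C (y j'))).natDegree ≤ n - m := by
    refine (Polynomial.natDegree_prod_le _ _).trans ?_
    simp only [Polynomial.natDegree_X_sub_C]
    rw [Finset.sum_const, smul_eq_mul, mul_one, Finset.card_compl, hJ, Fintype.card_fin]
  have hH : (∏ j ∈ J, (C (y j) - X)).natDegree ≤ m := by
    refine (Polynomial.natDegree_prod_le _ _).trans ?_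
    have : ∀ j : Fin n, (C (y j) - X).natDegree = 1 := by
      intro j
      rw [show (C (y j) - X) = -(X - C (y j)) by ring, Polynomial.natDegree_neg,
        Polynomial.natDegree_X_sub_C]
    rw [Finset.sum_congr rfl fun j _ => this j, Finset.sum_const, smul_eq_mul, mul_one, hJ]
  rw [S_eq m hmn _ _ hG hH x y hx hy, S_special m J hJ y hy]

theorem prod_prod_mul {α β : Type*} (s : Finset α) (t : Finset β) (A B : α → β → ℂ) :
    ∏ i ∈ s, ∏ j ∈ t, (A i j * B i j)
      = (∏ i ∈ s, ∏ j ∈ t, A i j) * (∏ i ∈ s, ∏ j ∈ t, B i j) := by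
  calc ∏ i ∈ s, ∏ j ∈ t, (A i j * B i j)
      = ∏ i ∈ s, ((∏ j ∈ t, A i j) * ∏ j ∈ t, B i j) :=
        Finset.prod_congr rfl fun i _ => Finset.prod_mul_distrib
    _ = _ := Finset.prod_mul_distrib

theorem rect {α β : Type*} (s : Finset α) (t : Finset β) (c : ℂ) (f : α → ℂ) (g : β → ℂ) :
    ∏ i ∈ s, ∏ j ∈ t, (c * (f i * g j))
      = c ^ (s.card * t.card) * ((∏ i ∈ s, f i) ^ t.card * (∏ j ∈ t, g j) ^ s.card) := by
  calc ∏ i ∈ s, ∏ j ∈ t, (c * (f i * g j))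
      = ∏ i ∈ s, ((c * f i) ^ t.card * ∏ j ∈ t, g j) := by
        refine Finset.prod_congr rfl fun i _ => ?_
        calc ∏ j ∈ t, (c * (f i * g j)) = ∏ j ∈ t, ((c * f i) * g j) :=
              Finset.prod_congr rfl fun j _ => by ring
          _ = (∏ j ∈ t, (c * f i)) * ∏ j ∈ t, g j := Finset.prod_mul_distrib
          _ = (c * f i) ^ t.card * ∏ j ∈ t, g j := by rw [Finset.prod_const]
    _ = (∏ i ∈ s, (c * f i) ^ t.card) * ∏ i ∈ s, (∏ j ∈ t, g j) := Finset.prod_mul_distrib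
    _ = ((∏ i ∈ s, (c * f i)) ^ t.card) * (∏ j ∈ t, g j) ^ s.card := by
        rw [Finset.prod_pow, Finset.prod_const]
    _ = ((c ^ s.card * ∏ i ∈ s, f i) ^ t.card) * (∏ j ∈ t, g j) ^ s.card := by
        rw [Finset.prod_mul_distrib, Finset.prod_const]
    _ = _ := by rw [mul_pow, ← pow_mul]; ring

theorem sin_formula (u v : ℂ) :
    Complex.sin (u - v) = (Complex.exp (Complex.I * u) ^ 2 - Complex.exp (Complex.I * v) ^ 2) *
      ((2 * Complex.I)⁻¹ * ((Complex.exp (Complex.I * u))⁻¹ * (Complex.exp (Complex.I * v))⁻¹)) := by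
  have h1 : Complex.exp (-(u - v) * Complex.I)
      = Complex.exp (Complex.I * v) / Complex.exp (Complex.I * u) := by
    rw [← Complex.exp_sub]; congr 1; ring
  have h2 : Complex.exp ((u - v) * Complex.I)
      = Complex.exp (Complex.I * u) / Complex.exp (Complex.I * v) := by
    rw [← Complex.exp_sub]; congr 1; ring
  rw [Complex.sin, h1, h2]
  have hu := Complex.exp_ne_zero (Complex.I * u)
  have hv := Complex.exp_ne_zero (Complex.I * v)
  have hI := Complex.I_ne_zero
  field_simp
  linear_combination (Complex.exp (Complex.I * v) ^ 2 - Complex.exp (Complex.I * u) ^ 2) * Complex.I_sq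

end TrigRes

/-- Trigonometric resultant identities: for fixed `J` of cardinality `m`,
the sum over all `I` of cardinality `m` of the sine cross-ratio products equals `1`. -/
theorem trigonometric_resultant_identity (d : ℕ) (hd : 2 ≤ d) (a b : Fin d → ℂ)
    (ha : ∀ i i', i ≠ i' → ∀ k : ℤ, a i - a i' ≠ (k : ℂ) * (Real.pi : ℂ))
    (hb : ∀ j j', j ≠ j' → ∀ k : ℤ, b j - b j' ≠ (k : ℂ) * (Real.pi : ℂ))
    (hab : ∀ i j, ∀ k : ℤ, a i - b j ≠ (k : ℂ) * (Real.pi : ℂ))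
    (m : ℕ) (hm : m ≤ d) (J : Finset (Fin d)) (hJ : J.card = m) :
    ∑ I ∈ Finset.powersetCard m (Finset.univ : Finset (Fin d)),
      ((∏ i ∈ I, ∏ j' ∈ Jᶜ, Complex.sin (a i - b j')) *
        (∏ i' ∈ Iᶜ, ∏ j ∈ J, Complex.sin (b j - a i'))) /
      ((∏ i ∈ I, ∏ i' ∈ Iᶜ, Complex.sin (a i - a i')) *
        (∏ j ∈ J, ∏ j' ∈ Jᶜ, Complex.sin (b j - b j'))) = 1 := by
  classical
  set E : Fin d → ℂ := fun i => Complex.exp (Complex.I * a i) with hE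
  set F : Fin d → ℂ := fun j => Complex.exp (Complex.I * b j) with hF
  set x : Fin d → ℂ := fun i => E i ^ 2 with hxdef
  set y : Fin d → ℂ := fun j => F j ^ 2 with hydef
  have h2I : (2 : ℂ) * Complex.I ≠ 0 := by simp [Complex.I_ne_zero]
  have hEne : ∀ i, E i ≠ 0 := fun i => Complex.exp_ne_zero _
  have hFne : ∀ j, F j ≠ 0 := fun j => Complex.exp_ne_zero _
  have hsq : ∀ z : ℂ, Complex.exp z ^ 2 = Complex.exp (z + z) := fun z => by
    rw [Complex.exp_add]; ring
  -- injectivity of x and y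
  have hxinj : Function.Injective x := by
    intro i i' he
    by_contra hne
    simp only [hxdef, hE] at he
    rw [hsq, hsq] at he
    obtain ⟨k, hk⟩ := Complex.exp_eq_exp_iff_exists_int.1 he
    exact ha i i' hne k (mul_left_cancel₀ h2I
      (show (2 * Complex.I) * (a i - a i') = (2 * Complex.I) * ((k : ℂ) * (Real.pi : ℂ)) by
        linear_combination hk))
  have hyinj : Function.Injective y := by
    intro j j' he
    by_contra hne
    simp only [hydef, hF] at he
    rw [hsq, hsq] at he
    obtain ⟨k, hk⟩ := Complex.exp_eq_exp_iff_exists_int.1 he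
    exact hb j j' hne k (mul_left_cancel₀ h2I
      (show (2 * Complex.I) * (b j - b j') = (2 * Complex.I) * ((k : ℂ) * (Real.pi : ℂ)) by
        linear_combination hk))
  -- sine formulas
  have hsinab : ∀ i j', Complex.sin (a i - b j') = (x i - y j') *
      ((2 * Complex.I)⁻¹ * ((E i)⁻¹ * (F j')⁻¹)) := by
    intro i j'
    simp only [hxdef, hydef, hE, hF]
    exact TrigRes.sin_formula _ _
  have hsinba : ∀ j i', Complex.sin (b j - a i') = (y j - x i') *
      ((2 * Complex.I)⁻¹ * ((E i')⁻¹ * (F j)⁻¹)) := by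
    intro j i'
    simp only [hxdef, hydef, hE, hF]
    rw [TrigRes.sin_formula]
    ring
  have hsinaa : ∀ i i', Complex.sin (a i - a i') = (x i - x i') *
      ((2 * Complex.I)⁻¹ * ((E i)⁻¹ * (E i')⁻¹)) := by
    intro i i'
    simp only [hxdef, hE]
    exact TrigRes.sin_formula _ _
  have hsinbb : ∀ j j', Complex.sin (b j - b j') = (y j - y j') *
      ((2 * Complex.I)⁻¹ * ((F j)⁻¹ * (F j')⁻¹)) := by
    intro j j'
    simp only [hydef, hF]
    exact TrigRes.sin_formula _ _
  -- cardinalities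
  have hJc : (Jᶜ : Finset (Fin d)).card = d - m := by
    rw [Finset.card_compl, hJ, Fintype.card_fin]
  set DY : ℂ := ∏ j ∈ J, ∏ j' ∈ Jᶜ, (y j - y j') with hDYdef
  have hDY : DY ≠ 0 := by
    rw [hDYdef, Finset.prod_ne_zero_iff]
    intro j hj
    rw [Finset.prod_ne_zero_iff]
    intro j' hj'
    exact sub_ne_zero.2 (hyinj.ne fun he => (Finset.mem_compl.1 hj') (by rwa [he] at hj))
  set v : ℂ := (2 * Complex.I)⁻¹ with hv
  have hvne : v ≠ 0 := inv_ne_zero h2I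
  -- term-wise conversion
  have hterm : ∀ I ∈ Finset.powersetCard m (Finset.univ : Finset (Fin d)),
      ((∏ i ∈ I, ∏ j' ∈ Jᶜ, Complex.sin (a i - b j')) *
        (∏ i' ∈ Iᶜ, ∏ j ∈ J, Complex.sin (b j - a i'))) /
      ((∏ i ∈ I, ∏ i' ∈ Iᶜ, Complex.sin (a i - a i')) *
        (∏ j ∈ J, ∏ j' ∈ Jᶜ, Complex.sin (b j - b j')))
      = ((∏ i ∈ I, ∏ j' ∈ Jᶜ, (x i - y j')) * ∏ i' ∈ Iᶜ, ∏ j ∈ J, (y j - x i')) /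
        (∏ i ∈ I, ∏ i' ∈ Iᶜ, (x i - x i')) / DY := by
    intro I hI
    have hIcard : I.card = m := (Finset.mem_powersetCard.1 hI).2
    have hIc : (Iᶜ : Finset (Fin d)).card = d - m := by
      rw [Finset.card_compl, hIcard, Fintype.card_fin]
    set N1 : ℂ := ∏ i ∈ I, ∏ j' ∈ Jᶜ, (x i - y j') with hN1
    set N2 : ℂ := ∏ i' ∈ Iᶜ, ∏ j ∈ J, (y j - x i') with hN2
    set DX : ℂ := ∏ i ∈ I, ∏ i' ∈ Iᶜ, (x i - x i') with hDX
    set s1 : ℂ := v ^ (m * (d - m)) * ((∏ i ∈ I, (E i)⁻¹) ^ (d - m) * (∏ j' ∈ Jᶜ, (F j')⁻¹) ^ m)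
      with hs1
    set s2 : ℂ := v ^ ((d - m) * m) * ((∏ i' ∈ Iᶜ, (E i')⁻¹) ^ m * (∏ j ∈ J, (F j)⁻¹) ^ (d - m))
      with hs2
    set s3 : ℂ := v ^ (m * (d - m)) * ((∏ i ∈ I, (E i)⁻¹) ^ (d - m) * (∏ i' ∈ Iᶜ, (E i')⁻¹) ^ m)
      with hs3
    set s4 : ℂ := v ^ (m * (d - m)) * ((∏ j ∈ J, (F j)⁻¹) ^ (d - m) * (∏ j' ∈ Jᶜ, (F j')⁻¹) ^ m)
      with hs4
    have c1 : ∏ i ∈ I, ∏ j' ∈ Jᶜ, Complex.sin (a i - b j') = N1 * s1 := by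
      rw [hN1, hs1,
        show ∏ i ∈ I, ∏ j' ∈ Jᶜ, Complex.sin (a i - b j')
          = ∏ i ∈ I, ∏ j' ∈ Jᶜ, ((x i - y j') * (v * ((E i)⁻¹ * (F j')⁻¹))) from
          Finset.prod_congr rfl fun i _ => Finset.prod_congr rfl fun j' _ => hsinab i j',
        TrigRes.prod_prod_mul, TrigRes.rect, hIcard, hJc]
    have c2 : ∏ i' ∈ Iᶜ, ∏ j ∈ J, Complex.sin (b j - a i') = N2 * s2 := by
      rw [hN2, hs2,
        show ∏ i' ∈ Iᶜ, ∏ j ∈ J, Complex.sin (b j - a i')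
          = ∏ i' ∈ Iᶜ, ∏ j ∈ J, ((y j - x i') * (v * ((E i')⁻¹ * (F j)⁻¹))) from
          Finset.prod_congr rfl fun i' _ => Finset.prod_congr rfl fun j _ => hsinba j i',
        TrigRes.prod_prod_mul, TrigRes.rect, hIc, hJ]
    have c3 : ∏ i ∈ I, ∏ i' ∈ Iᶜ, Complex.sin (a i - a i') = DX * s3 := by
      rw [hDX, hs3,
        show ∏ i ∈ I, ∏ i' ∈ Iᶜ, Complex.sin (a i - a i')
          = ∏ i ∈ I, ∏ i' ∈ Iᶜ, ((x i - x i') * (v * ((E i)⁻¹ * (E i')⁻¹))) from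
          Finset.prod_congr rfl fun i _ => Finset.prod_congr rfl fun i' _ => hsinaa i i',
        TrigRes.prod_prod_mul, TrigRes.rect, hIcard, hIc]
    have c4 : ∏ j ∈ J, ∏ j' ∈ Jᶜ, Complex.sin (b j - b j') = DY * s4 := by
      rw [hDYdef, hs4,
        show ∏ j ∈ J, ∏ j' ∈ Jᶜ, Complex.sin (b j - b j')
          = ∏ j ∈ J, ∏ j' ∈ Jᶜ, ((y j - y j') * (v * ((F j)⁻¹ * (F j')⁻¹))) from
          Finset.prod_congr rfl fun j _ => Finset.prod_congr rfl fun j' _ => hsinbb j j',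
        TrigRes.prod_prod_mul, TrigRes.rect, hJ, hJc]
    rw [c1, c2, c3, c4]
    have hprodinv : ∀ (s : Finset (Fin d)) (f : Fin d → ℂ), (∀ i, f i ≠ 0) →
        (∏ i ∈ s, (f i)⁻¹) ≠ 0 := by
      intro s f hf
      rw [Finset.prod_ne_zero_iff]
      exact fun i _ => inv_ne_zero (hf i)
    have hs3ne : s3 ≠ 0 := by
      rw [hs3]
      exact mul_ne_zero (pow_ne_zero _ hvne) (mul_ne_zero
        (pow_ne_zero _ (hprodinv _ _ hEne)) (pow_ne_zero _ (hprodinv _ _ hEne)))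
    have hs4ne : s4 ≠ 0 := by
      rw [hs4]
      exact mul_ne_zero (pow_ne_zero _ hvne) (mul_ne_zero
        (pow_ne_zero _ (hprodinv _ _ hFne)) (pow_ne_zero _ (hprodinv _ _ hFne)))
    have hs34 : s3 * s4 ≠ 0 := mul_ne_zero hs3ne hs4ne
    have hscal : s1 * s2 = s3 * s4 := by
      rw [hs1, hs2, hs3, hs4, Nat.mul_comm (d - m) m]
      ring
    have e1 : (N1 * s1) * (N2 * s2) = (N1 * N2) * (s3 * s4) := by
      rw [← hscal]; ring
    have e2 : (DX * s3) * (DY * s4) = (DX * DY) * (s3 * s4) := by ring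
    rw [e1, e2, mul_div_mul_right _ _ hs34, div_div]
  rw [Finset.sum_congr rfl hterm, ← Finset.sum_div]
  have hS : ∑ I ∈ Finset.powersetCard m (Finset.univ : Finset (Fin d)),
      ((∏ i ∈ I, ∏ j' ∈ Jᶜ, (x i - y j')) * ∏ i' ∈ Iᶜ, ∏ j ∈ J, (y j - x i')) /
        (∏ i ∈ I, ∏ i' ∈ Iᶜ, (x i - x i'))
      = TrigRes.S m (∏ j' ∈ Jᶜ, (Polynomial.X - Polynomial.C (y j')))
          (∏ j ∈ J, (Polynomial.C (y j) - Polynomial.X)) x := by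
    rw [TrigRes.S]
    refine Finset.sum_congr rfl fun I _ => ?_
    congr 1
    congr 1
    · exact Finset.prod_congr rfl fun i _ => by
        rw [Polynomial.eval_prod]
        exact (Finset.prod_congr rfl fun j' _ => by simp).symm
    · exact Finset.prod_congr rfl fun i' _ => by
        rw [Polynomial.eval_prod]
        exact (Finset.prod_congr rfl fun j _ => by simp).symm
  rw [hS, TrigRes.core m hm J hJ x y hxinj hyinj, ← hDYdef, div_self hDY]
end

section
/- Let r > 0 and let z, w ∈ ℂ with |z| > r and |w| > r. Then exp( −(1/π) ∫_{{ζ ∈ ℂ : |ζ| < r}} 1/((ζ − z) · conj(ζ − w)) dA(ζ) ) = 1 − r²/(z · conj(w)), where dA denotes the Lebesgue area measure on ℂ. Equivalently, the exponential transform of the disk 𝔻(0,r) is E_{𝔻(0,r)}(z,w) = 1 − r²/(z·w̄) for z, w outside the closed disk. -/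
set_option maxHeartbeats 1000000

open MeasureTheory Complex Metric Set intervalIntegral Real

lemma circle_aux {ρ : ℝ} (hρ : 0 < ρ) {a : ℂ} (ha : a ≠ 0) (hne : ‖a‖ ≠ ρ) :
    (∫ θ in (0:ℝ)..(2*π), ((ρ:ℂ) * Complex.exp (θ * Complex.I) - a)⁻¹) =
      if ρ < ‖a‖ then -(2*π)/a else 0 := by
  have hI : (Complex.I : ℂ) ≠ 0 := Complex.I_ne_zero
  have key : (∮ u in C(0, ρ), (u - a)⁻¹ * (Complex.I * u)⁻¹) =
      ∫ θ in (0:ℝ)..(2*π), ((ρ:ℂ) * Complex.exp (θ * Complex.I) - a)⁻¹ := by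
    rw [circleIntegral]
    apply intervalIntegral.integral_congr
    intro θ _
    have hu : circleMap 0 ρ θ ≠ 0 := by
      simp [circleMap_eq_center_iff, hρ.ne']
    have hc : circleMap 0 ρ θ = (ρ:ℂ) * Complex.exp (θ * Complex.I) := by
      simp [circleMap]
    simp only [deriv_circleMap, smul_eq_mul, circleMap_zero]
    rw [hc] at hu
    set u := (ρ:ℂ) * Complex.exp (θ * Complex.I) with hu_def
    rw [show u * Complex.I * ((u - a)⁻¹ * (Complex.I * u)⁻¹) =
        (u - a)⁻¹ * ((Complex.I * u) * (Complex.I * u)⁻¹) by ring,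
      mul_inv_cancel₀ (mul_ne_zero hI hu), mul_one]
  have h0 : (∮ u in C(0, ρ), u⁻¹) = 2 * π * Complex.I := by
    have := circleIntegral.integral_sub_inv_of_mem_ball (c := (0:ℂ)) (w := 0) (R := ρ)
      (by simpa using hρ)
    simpa using this
  have hint1 : CircleIntegrable (fun u : ℂ => (u - a)⁻¹) 0 ρ := by
    rw [circleIntegrable_sub_inv_iff]
    right
    intro h
    rw [mem_sphere_iff_norm] at h
    simp [abs_of_pos hρ] at h
    exact hne h
  have hint0 : CircleIntegrable (fun u : ℂ => u⁻¹) 0 ρ := by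
    have : CircleIntegrable (fun u : ℂ => (u - 0)⁻¹) 0 ρ := by
      rw [circleIntegrable_sub_inv_iff]
      right
      intro h
      rw [mem_sphere_iff_norm] at h
      simp [abs_of_pos hρ] at h
      exact hρ.ne' h.symm
    simpa using this
  have congr2 : (∮ u in C(0, ρ), (u - a)⁻¹ * (Complex.I * u)⁻¹) =
      (∮ u in C(0, ρ), (Complex.I * a)⁻¹ * ((u - a)⁻¹ - u⁻¹)) := by
    apply circleIntegral.integral_congr hρ.le
    intro u hu
    have hu0 : u ≠ 0 := by
      rw [mem_sphere_iff_norm] at hu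
      intro h; rw [h] at hu; simp [abs_of_pos hρ] at hu; exact hρ.ne' hu.symm
    have hua : u ≠ a := by
      rw [mem_sphere_iff_norm] at hu
      intro h
      apply hne
      rw [← h]
      simpa [abs_of_pos hρ] using hu
    have : u - a ≠ 0 := sub_ne_zero.mpr hua
    field_simp
    ring
  rw [← key, congr2, circleIntegral.integral_const_mul,
    circleIntegral.integral_sub hint1 hint0, h0]
  by_cases hlt : ρ < ‖a‖
  · rw [if_pos hlt]
    have hz : (∮ u in C(0, ρ), (u - a)⁻¹) = 0 := by
      apply circleIntegral_eq_zero_of_differentiable_on_off_countable hρ.le countable_empty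
      · apply ContinuousOn.inv₀ (by fun_prop)
        intro u hu
        refine sub_ne_zero.mpr fun h => ?_
        rw [mem_closedBall_zero_iff, h] at hu
        exact absurd hu (not_le.mpr (by simpa using hlt))
      · intro u hu
        apply DifferentiableAt.inv (by fun_prop)
        refine sub_ne_zero.mpr fun h => ?_
        rw [Set.mem_diff, mem_ball_zero_iff, h] at hu
        exact absurd hu.1 (not_lt.mpr (by simpa using hlt.le))
    rw [hz]
    field_simp
    ring
  · rw [if_neg hlt]
    have hmem : a ∈ ball (0:ℂ) ρ := by
      rw [mem_ball_zero_iff]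
      simpa using lt_of_le_of_ne (not_lt.mp hlt) hne
    rw [circleIntegral.integral_sub_inv_of_mem_ball hmem]
    simp

lemma inner_int {ρ : ℝ} (hρ : 0 < ρ) {z v : ℂ} (hz : ρ < ‖z‖)
    (hv : ρ < ‖v‖) :
    (∫ θ in (0:ℝ)..(2*π), (((ρ:ℂ) * Complex.exp (θ * Complex.I) - z) *
      ((ρ:ℂ) * Complex.exp (-(θ * Complex.I)) - v))⁻¹) = 2*π/(z*v - (ρ:ℂ)^2) := by
  have hρ0 : (ρ:ℂ) ≠ 0 := Complex.ofReal_ne_zero.mpr hρ.ne'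
  have habsρ2 : ‖(ρ:ℂ)^2‖ = ρ^2 := by
    rw [norm_pow, Complex.norm_real, Real.norm_eq_abs, abs_of_pos hρ]
  have hz0 : z ≠ 0 := by
    intro h; rw [h] at hz; simp at hz; linarith
  have hv0 : v ≠ 0 := by
    intro h; rw [h] at hv; simp at hv; linarith
  have hc : z * v - (ρ:ℂ)^2 ≠ 0 := by
    intro h
    rw [sub_eq_zero] at h
    have h2 := congrArg (‖·‖) h
    rw [norm_mul, habsρ2] at h2
    nlinarith
  have hc' : (ρ:ℂ)^2 - z*v ≠ 0 := fun h => hc (by linear_combination -h)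
  set b : ℂ := (ρ:ℂ)^2 / v with hb_def
  have hb0 : b ≠ 0 := div_ne_zero (pow_ne_zero 2 hρ0) hv0
  have hb_abs : ‖b‖ < ρ := by
    rw [hb_def, norm_div, habsρ2, div_lt_iff₀ (lt_trans hρ hv)]
    nlinarith
  set A : ℂ := z / ((ρ:ℂ)^2 - z*v) with hA_def
  set B : ℂ := (ρ:ℂ)^2 / (v * (z*v - (ρ:ℂ)^2)) with hB_def
  have key : ∀ θ : ℝ, (((ρ:ℂ) * Complex.exp (θ * Complex.I) - z) *
      ((ρ:ℂ) * Complex.exp (-(θ * Complex.I)) - v))⁻¹ =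
      A * ((ρ:ℂ) * Complex.exp (θ * Complex.I) - z)⁻¹ +
      B * ((ρ:ℂ) * Complex.exp (θ * Complex.I) - b)⁻¹ := by
    intro θ
    set u := Complex.exp (θ * Complex.I) with hu_def
    have hu0 : u ≠ 0 := Complex.exp_ne_zero _
    have huabs : ‖u‖ = 1 := Complex.norm_exp_ofReal_mul_I θ
    have habs_ru : ‖(ρ:ℂ) * u‖ = ρ := by
      rw [norm_mul, huabs, mul_one, Complex.norm_real, Real.norm_eq_abs, abs_of_pos hρ]
    have hne1 : (ρ:ℂ) * u - z ≠ 0 := by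
      intro h; rw [sub_eq_zero] at h
      rw [← h, habs_ru] at hz; linarith
    have hne2 : (ρ:ℂ) - v * u ≠ 0 := by
      intro h; rw [sub_eq_zero] at h
      have h2 := congrArg (‖·‖) h
      rw [norm_mul, huabs, mul_one, Complex.norm_real, Real.norm_eq_abs, abs_of_pos hρ] at h2
      linarith
    have hne3 : (ρ:ℂ) * u * v - (ρ:ℂ)^2 ≠ 0 := by
      intro h; rw [sub_eq_zero] at h
      have h2 := congrArg (‖·‖) h
      rw [norm_mul, habs_ru, habsρ2] at h2
      nlinarith
    have e2 : (ρ:ℂ) * Complex.exp (-(θ * Complex.I)) - v = ((ρ:ℂ) - v * u) * u⁻¹ := by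
      rw [Complex.exp_neg, ← hu_def]
      field_simp

    have e3 : (ρ:ℂ) * u - b = ((ρ:ℂ) * u * v - (ρ:ℂ)^2) / v := by
      rw [hb_def]; field_simp
    rw [e2, e3, hA_def, hB_def]
    rw [show (ρ:ℂ) * u * v - (ρ:ℂ) ^ 2 = (ρ:ℂ) * (u * v - ρ) by ring,
      show (ρ:ℂ) - v * u = -(u * v - ρ) by ring,
      show (ρ:ℂ) ^ 2 - z * v = -(z * v - (ρ:ℂ) ^ 2) by ring]
    have hne4 : u * v - ρ ≠ 0 := fun h => hne2 (by linear_combination -h)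
    field_simp
    ring
  rw [intervalIntegral.integral_congr (g := fun θ =>
      A * ((ρ:ℂ) * Complex.exp (θ * Complex.I) - z)⁻¹ +
      B * ((ρ:ℂ) * Complex.exp (θ * Complex.I) - b)⁻¹) (fun θ _ => key θ)]
  have cont : ∀ (a : ℂ), ‖a‖ ≠ ρ → Continuous (fun θ : ℝ =>
      ((ρ:ℂ) * Complex.exp (θ * Complex.I) - a)⁻¹) := by
    intro a hne
    apply Continuous.inv₀ (by fun_prop)
    intro θ h
    rw [sub_eq_zero] at h
    exact hne (by rw [← h, norm_mul, Complex.norm_exp_ofReal_mul_I, mul_one,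
      Complex.norm_real, Real.norm_eq_abs, abs_of_pos hρ])
  have hza : ‖z‖ ≠ ρ := ne_of_gt hz
  have hba : ‖b‖ ≠ ρ := ne_of_lt hb_abs
  rw [intervalIntegral.integral_add
      (((cont z hza).intervalIntegrable _ _).const_mul _)
      (((cont b hba).intervalIntegrable _ _).const_mul _),
    intervalIntegral.integral_const_mul, intervalIntegral.integral_const_mul,
    circle_aux hρ hz0 hza, circle_aux hρ hb0 hba, if_pos hz, if_neg (not_lt.mpr hb_abs.le),
    mul_zero, add_zero, hA_def, div_mul_div_comm,
    div_eq_div_iff (mul_ne_zero hc' hz0) hc]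
  push_cast
  ring

lemma outer_int {r : ℝ} (hr : 0 < r) {c : ℂ} (hc : r^2 < ‖c‖) :
    (∫ ρ in (0:ℝ)..r, (ρ:ℂ) * (2*π/(c - (ρ:ℂ)^2))) =
      -(π:ℂ) * Complex.log (1 - (r:ℂ)^2/c) := by
  have hc0 : c ≠ 0 := by
    intro h; rw [h] at hc; simp at hc; nlinarith
  have habs : ∀ ρ : ℝ, ρ ∈ Set.uIcc 0 r → ‖(ρ:ℂ)^2 / c‖ < 1 := by
    intro ρ hρ
    rw [Set.uIcc_of_le hr.le] at hρ
    rw [norm_div, norm_pow, Complex.norm_real, Real.norm_eq_abs, div_lt_one (lt_of_le_of_lt (by positivity) hc)]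
    have h1 : |ρ| ≤ r := abs_le.mpr ⟨by linarith [hρ.1], hρ.2⟩
    nlinarith [abs_nonneg ρ, _root_.sq_abs ρ]
  have hne : ∀ ρ : ℝ, ρ ∈ Set.uIcc 0 r → c - (ρ:ℂ)^2 ≠ 0 := by
    intro ρ hρ h
    rw [sub_eq_zero] at h
    have := habs ρ hρ
    rw [← h, div_self hc0] at this
    simp at this
  have hslit : ∀ ρ : ℝ, ρ ∈ Set.uIcc 0 r → (1 - (ρ:ℂ)^2/c) ∈ Complex.slitPlane := by
    intro ρ hρ
    refine Or.inl ?_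
    have h1 : ((ρ:ℂ)^2/c).re ≤ ‖(ρ:ℂ)^2/c‖ := Complex.re_le_norm _
    have h2 := habs ρ hρ
    simp only [Complex.sub_re, Complex.one_re]
    linarith
  have hderiv : ∀ ρ : ℝ, ρ ∈ Set.uIcc 0 r →
      HasDerivAt (fun t : ℝ => -(π:ℂ) * Complex.log (1 - (t:ℂ)^2/c))
        ((ρ:ℂ) * (2*π/(c - (ρ:ℂ)^2))) ρ := by
    intro ρ hρ
    have h1 : HasDerivAt (fun t : ℝ => (t:ℂ)) 1 ρ := by
      simpa using (hasDerivAt_id ρ).ofReal_comp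
    have h2 : HasDerivAt (fun t : ℝ => 1 - (t:ℂ)^2/c) (-(2*(ρ:ℂ)/c)) ρ := by
      have h := ((h1.mul h1).div_const c).const_sub 1
      simp only [pow_two]
      refine h.congr_deriv ?_
      ring
    have h3 := (h2.clog_real (hslit ρ hρ)).const_mul (-(π:ℂ))
    refine h3.congr_deriv ?_
    have hd := hne ρ hρ
    have hu : 1 - (ρ:ℂ)^2/c ≠ 0 := Complex.slitPlane_ne_zero (hslit ρ hρ)
    field_simp
  have hcont : ContinuousOn (fun ρ : ℝ => (ρ:ℂ) * (2*π/(c - (ρ:ℂ)^2))) (Set.uIcc 0 r) := by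
    apply ContinuousOn.mul (by fun_prop)
    apply ContinuousOn.div continuousOn_const (by fun_prop)
    exact fun ρ hρ => hne ρ hρ
  rw [intervalIntegral.integral_eq_sub_of_hasDerivAt hderiv hcont.intervalIntegrable]
  simp

/-- The exponential transform of a bounded open set `Ω ⊆ ℂ`:
`E_Ω(z,w) = exp(−(1/π) ∫_Ω 1/((ζ−z)·conj(ζ−w)) dA(ζ))`. -/
noncomputable def expTransform (Ω : Set ℂ) (z w : ℂ) : ℂ :=
  Complex.exp (-(1 / (Real.pi : ℂ)) *
    ∫ ζ in Ω, ((ζ - z) * (starRingEnd ℂ) (ζ - w))⁻¹)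

/-- The exponential transform of the disk `𝔻(0,r)` is `1 − r²/(z·w̄)`
for `|z|, |w| > r`. -/
theorem expTransform_disk (r : ℝ) (hr : 0 < r) (z w : ℂ)
    (hz : r < ‖z‖) (hw : r < ‖w‖) :
    expTransform {ζ : ℂ | ‖ζ‖ < r} z w =
      1 - (r : ℂ) ^ 2 / (z * (starRingEnd ℂ) w) := by
  have hπ : (π:ℂ) ≠ 0 := Complex.ofReal_ne_zero.mpr Real.pi_ne_zero
  set v : ℂ := (starRingEnd ℂ) w with hv_def
  have hvabs : ‖v‖ = ‖w‖ := Complex.norm_conj w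
  set c : ℂ := z * v with hc_def
  have habsc : ‖c‖ = ‖z‖ * ‖w‖ := by
    rw [hc_def, norm_mul, hvabs]
  have hr2c : r^2 < ‖c‖ := by rw [habsc]; nlinarith
  have hc0 : c ≠ 0 := by
    intro h; rw [h] at hr2c; simp at hr2c; nlinarith
  have hu0 : 1 - (r:ℂ)^2 / c ≠ 0 := by
    intro h
    rw [sub_eq_zero] at h
    have h2 := congrArg (‖·‖) h
    rw [norm_div, norm_one, norm_pow, Complex.norm_real, Real.norm_eq_abs, abs_of_pos hr,
      eq_div_iff (fun hh => hc0 (norm_eq_zero.mp hh)), one_mul] at h2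
    rw [← h2] at hr2c
    exact lt_irrefl _ hr2c
  set F : ℂ → ℂ := fun ζ => ((ζ - z) * (starRingEnd ℂ) (ζ - w))⁻¹ with hF_def
  set D : Set ℂ := {ζ : ℂ | ‖ζ‖ < r} with hD_def
  set S : Set (ℝ × ℝ) := Set.Ioo (0:ℝ) r ×ˢ Set.Ioo (-π) π with hS_def
  have hDmeas : MeasurableSet D :=
    (isOpen_lt (continuous_norm) continuous_const).measurableSet
  have hSmeas : MeasurableSet S := measurableSet_Ioo.prod measurableSet_Ioo
  -- uniform bound ingredients
  have hzr : 0 < ‖z‖ - r := by linarith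
  have hwr : 0 < ‖w‖ - r := by linarith
  have hden1 : ∀ ζ : ℂ, ‖ζ‖ < r → ‖z‖ - r ≤ ‖ζ - z‖ := by
    intro ζ hζ
    have h1 := abs_le.mp (abs_norm_sub_norm_le ζ z)
    linarith [h1.1]
  have hden2 : ∀ ζ : ℂ, ‖ζ‖ < r → ‖w‖ - r ≤ ‖ζ - w‖ := by
    intro ζ hζ
    have h1 := abs_le.mp (abs_norm_sub_norm_le ζ w)
    linarith [h1.1]
  have hsymm_abs : ∀ p : ℝ × ℝ, 0 < p.1 →
      ‖Complex.polarCoord.symm p‖ = p.1 := by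
    intro p hp
    rw [Complex.norm_polarCoord_symm, abs_of_pos hp]
  -- Step 1-4 : reduce to the integral over S
  have step1 : (∫ ζ in D, F ζ) = ∫ p in S, p.1 • F (Complex.polarCoord.symm p) := by
    rw [← MeasureTheory.integral_indicator hDmeas, ← Complex.integral_comp_polarCoord_symm (D.indicator F)]
    have hcong : ∀ p ∈ polarCoord.target,
        p.1 • D.indicator F (Complex.polarCoord.symm p) =
        S.indicator (fun q : ℝ × ℝ => q.1 • F (Complex.polarCoord.symm q)) p := by
      intro p hp
      rw [polarCoord_target, Set.mem_prod] at hp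
      obtain ⟨hp1, hp2⟩ := hp
      rw [Set.mem_Ioi] at hp1
      have hmemS : p ∈ S ↔ p.1 < r := by
        rw [hS_def, Set.mem_prod]
        exact ⟨fun h => h.1.2, fun h => ⟨⟨hp1, h⟩, hp2⟩⟩
      have hmemD : Complex.polarCoord.symm p ∈ D ↔ p.1 < r := by
        rw [hD_def, Set.mem_setOf_eq, hsymm_abs p hp1]
      by_cases h : p.1 < r
      · rw [Set.indicator_of_mem (hmemD.mpr h), Set.indicator_of_mem (hmemS.mpr h)]
      · rw [Set.indicator_of_notMem (fun hh => h (hmemD.mp hh)),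
          Set.indicator_of_notMem (fun hh => h (hmemS.mp hh)), smul_zero]
    rw [setIntegral_congr_fun polarCoord.open_target.measurableSet hcong,
      setIntegral_indicator hSmeas,
      Set.inter_eq_self_of_subset_right]
    intro p hp
    rw [polarCoord_target]
    exact ⟨Set.Ioo_subset_Ioi_self hp.1, hp.2⟩
  -- Integrability on S
  have hbound : ∀ p ∈ S, ‖p.1 • F (Complex.polarCoord.symm p)‖ ≤
      r * (((‖z‖ - r) * (‖w‖ - r))⁻¹) := by
    intro p hp
    obtain ⟨hp1, hp2⟩ := hp
    set ζ := Complex.polarCoord.symm p with hζ_def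
    have hζr : ‖ζ‖ < r := by rw [hζ_def, hsymm_abs p hp1.1]; exact hp1.2
    have h1 := hden1 ζ hζr
    have h2 := hden2 ζ hζr
    rw [norm_smul, Real.norm_eq_abs, abs_of_pos hp1.1, hF_def]
    have hFnorm : ‖((ζ - z) * (starRingEnd ℂ) (ζ - w))⁻¹‖ =
        (‖ζ - z‖ * ‖ζ - w‖)⁻¹ := by
      rw [norm_inv, norm_mul, Complex.norm_conj]
    rw [hFnorm]
    apply mul_le_mul hp1.2.le _ (by positivity) hr.le
    exact inv_anti₀ (by positivity)
      (mul_le_mul h1 h2 hwr.le (norm_nonneg _))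
  have hInt : IntegrableOn (fun p : ℝ × ℝ => p.1 • F (Complex.polarCoord.symm p)) S := by
    apply Measure.integrableOn_of_bounded
      (M := r * (((‖z‖ - r) * (‖w‖ - r))⁻¹))
    · rw [hS_def, MeasureTheory.Measure.volume_eq_prod, Measure.prod_prod]
      exact (ENNReal.mul_lt_top (by simp [Real.volume_Ioo]) (by simp [Real.volume_Ioo])).ne
    · apply Measurable.aestronglyMeasurable
      apply Measurable.smul measurable_fst
      have hs : Continuous fun p : ℝ × ℝ => Complex.polarCoord.symm p := by
        simp_rw [Complex.polarCoord_symm_apply]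
        fun_prop
      exact (((hs.sub continuous_const).mul
        (Complex.continuous_conj.comp (hs.sub continuous_const))).measurable).inv
    · rw [ae_restrict_iff' hSmeas]
      exact ae_of_all _ hbound
  -- Fubini
  have step2 : (∫ p in S, p.1 • F (Complex.polarCoord.symm p)) =
      ∫ ρ in Set.Ioo (0:ℝ) r, ∫ θ in Set.Ioo (-π) π,
        (ρ:ℝ) • F (Complex.polarCoord.symm (ρ, θ)) := by
    rw [hS_def, MeasureTheory.Measure.volume_eq_prod, setIntegral_prod]
    rw [← MeasureTheory.Measure.volume_eq_prod, ← hS_def]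
    exact hInt
  -- Inner integral
  have step3 : ∀ ρ ∈ Set.Ioo (0:ℝ) r,
      (∫ θ in Set.Ioo (-π) π, (ρ:ℝ) • F (Complex.polarCoord.symm (ρ, θ))) =
        (ρ:ℂ) * (2*π/(c - (ρ:ℂ)^2)) := by
    intro ρ hρ
    have hρ0 : 0 < ρ := hρ.1
    have hρz : ρ < ‖z‖ := lt_trans hρ.2 hz
    have hρv : ρ < ‖v‖ := by rw [hvabs]; exact lt_trans hρ.2 hw
    set G : ℝ → ℂ := fun θ => (((ρ:ℂ) * Complex.exp (θ * Complex.I) - z) *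
      ((ρ:ℂ) * Complex.exp (-(θ * Complex.I)) - v))⁻¹ with hG_def
    have hFeq : ∀ θ : ℝ, F (Complex.polarCoord.symm (ρ, θ)) = G θ := by
      intro θ
      have hsymm : Complex.polarCoord.symm (ρ, θ) = (ρ:ℂ) * Complex.exp (θ * Complex.I) := by
        rw [Complex.polarCoord_symm_apply, Complex.exp_mul_I]
        push_cast
        ring
      have hconj : (starRingEnd ℂ) ((ρ:ℂ) * Complex.exp (θ * Complex.I) - w)
          = (ρ:ℂ) * Complex.exp (-(θ * Complex.I)) - v := by
        rw [hv_def, map_sub, map_mul, Complex.conj_ofReal, ← Complex.exp_conj,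
          map_mul, Complex.conj_ofReal, Complex.conj_I, mul_neg]
      rw [hsymm, hF_def, hG_def]
      simp only
      rw [hconj]
    rw [show (fun θ : ℝ => (ρ:ℝ) • F (Complex.polarCoord.symm (ρ, θ)))
        = fun θ : ℝ => (ρ:ℝ) • G θ from funext fun θ => by rw [hFeq θ]]
    rw [MeasureTheory.integral_smul, ← integral_Ioc_eq_integral_Ioo,
      ← intervalIntegral.integral_of_le (by linarith [Real.pi_pos] : -π ≤ π)]
    have hper : Function.Periodic G (2*π) := by
      intro θ
      rw [hG_def]
      simp only
      rw [show ((θ + 2*π : ℝ):ℂ) * Complex.I = θ * Complex.I + 2*π*Complex.I by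
          push_cast; ring,
        Complex.exp_add, Complex.exp_two_pi_mul_I, mul_one,
        show -((θ * Complex.I : ℂ) + 2*π*Complex.I) =
          -(θ * Complex.I) + -(2*π*Complex.I) by ring,
        Complex.exp_add, Complex.exp_neg (2*π*Complex.I), Complex.exp_two_pi_mul_I,
        inv_one, mul_one]
    have hshift := hper.intervalIntegral_add_eq (-π) 0
    rw [show -π + 2*π = π by ring, zero_add] at hshift
    rw [hshift, hG_def, inner_int hρ0 hρz hρv, Complex.real_smul, hc_def]
  rw [setIntegral_congr_fun measurableSet_Ioo step3] at step2
  -- Outer integral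
  have step4 : (∫ ρ in Set.Ioo (0:ℝ) r, (ρ:ℂ) * (2*π/(c - (ρ:ℂ)^2))) =
      -(π:ℂ) * Complex.log (1 - (r:ℂ)^2/c) := by
    rw [← integral_Ioc_eq_integral_Ioo, ← intervalIntegral.integral_of_le hr.le]
    exact outer_int hr hr2c
  have hmain : (∫ ζ in D, F ζ) = -(π:ℂ) * Complex.log (1 - (r:ℂ)^2/c) := by
    rw [step1, step2, step4]
  rw [expTransform]
  rw [show (∫ ζ in {ζ : ℂ | ‖ζ‖ < r}, ((ζ - z) * (starRingEnd ℂ) (ζ - w))⁻¹) =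
      ∫ ζ in D, F ζ from rfl, hmain]
  rw [show -(1 / (π:ℂ)) * (-(π:ℂ) * Complex.log (1 - (r:ℂ)^2/c)) =
      Complex.log (1 - (r:ℂ)^2/c) by field_simp]
  rw [Complex.exp_log hu0, hc_def, hv_def]
end

section
/- Let Ω₁, Ω₂ ⊆ ℂ be bounded open sets, let A, B ∈ ℂ[X] be coprime polynomials with B ≠ 0 and deg A ≤ deg B, and let F = A/B. Let p ≥ 1 and assume: (i) B has no zeros in Ω₁ and F(Ω₁) ⊆ Ω₂; (ii) for almost every u ∈ Ω₂ (with respect to area measure), the total multiplicity of the roots of A − uB lying in Ω₁ equals p. Let z, w ∈ ℂ∖closure(Ω₂) be such that deg(A − zB) = deg(A − wB) = deg B and such that every root of A − zB, of A − wB, and of B lies outside closure(Ω₁). Then E_{Ω₂}(z,w)^p = ( ∏_{α ∈ roots(A−zB)} ∏_{γ ∈ roots(A−wB)} E_{Ω₁}(α,γ) · ∏_{β ∈ roots(B)} ∏_{δ ∈ roots(B)} E_{Ω₁}(β,δ) ) / ( ∏_{α ∈ roots(A−zB)} ∏_{δ ∈ roots(B)} E_{Ω₁}(α,δ) · ∏_{β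 ∈ roots(B)} ∏_{γ ∈ roots(A−wB)} E_{Ω₁}(β,γ) ), where all roots are counted with multiplicity. -/
open MeasureTheory Polynomial
open scoped ENNReal

section Helpers

private lemma conj_div_identity (d b pz pw : ℂ) (hb : b ≠ 0) (hpz : pz ≠ 0) (hpw : pw ≠ 0) :
    (d / b ^ 2 * (starRingEnd ℂ) (d / b ^ 2)) * ((pz / b) * (starRingEnd ℂ) (pw / b))⁻¹ =
      (d / (pz * b)) * (starRingEnd ℂ) (d / (pw * b)) := by
  have hb' : (starRingEnd ℂ) b ≠ 0 := by simpa using hb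
  have hpw' : (starRingEnd ℂ) pw ≠ 0 := by
    intro h0
    apply hpw
    have h1 := congrArg (starRingEnd ℂ) h0
    simpa using h1
  simp only [map_div₀, map_pow, map_mul]
  field_simp


private lemma exp_multiset_sum (s : Multiset ℂ) :
    Complex.exp s.sum = (s.map Complex.exp).prod := by
  induction s using Multiset.induction with
  | empty => simp
  | cons a s ih => simp [Complex.exp_add, ih]

private lemma multiset_integral_sum {ι : Type*} (μ : Measure ℂ) (s : Multiset ι)
    (f : ι → ℂ → ℂ) (hf : ∀ i ∈ s, Integrable (f i) μ) :
    Integrable (fun x => (s.map (fun i => f i x)).sum) μ ∧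
      (∫ x, (s.map (fun i => f i x)).sum ∂μ) = (s.map (fun i => ∫ x, f i x ∂μ)).sum := by
  induction s using Multiset.induction with
  | empty => simp [integrable_const]
  | cons a s ih =>
    have ha : Integrable (f a) μ := hf a (Multiset.mem_cons_self a s)
    have ih' := ih (fun i hi => hf i (Multiset.mem_cons_of_mem hi))
    constructor
    · have hadd : Integrable (fun x => f a x + (s.map (fun i => f i x)).sum) μ := ha.add ih'.1; simpa using hadd
    · simp only [Multiset.map_cons, Multiset.sum_cons]
      rw [integral_add ha ih'.1, ih'.2]


private lemma deriv_multiset_prod (s : Multiset ℂ) (ζ : ℂ) (h : ∀ r ∈ s, ζ - r ≠ 0) :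
    (derivative (s.map (fun r => X - C r)).prod).eval ζ =
      ((s.map (fun r => ζ - r)).prod) * ((s.map (fun r => (ζ - r)⁻¹)).sum) := by
  induction s using Multiset.induction with
  | empty => simp
  | cons a s ih =>
    have ha : ζ - a ≠ 0 := h a (Multiset.mem_cons_self a s)
    have ih' := ih (fun r hr => h r (Multiset.mem_cons_of_mem hr))
    have hev' : eval ζ (Multiset.map (fun r => X - C r) s).prod =
        (Multiset.map (fun r => ζ - r) s).prod := by
      rw [eval_multiset_prod, Multiset.map_map]
      simp [Function.comp]
    simp only [Multiset.map_cons, Multiset.prod_cons, Multiset.sum_cons, derivative_mul,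
      derivative_sub, derivative_X, derivative_C, sub_zero, eval_add, eval_mul, eval_one,
      eval_sub, eval_X, eval_C, one_mul, ih', hev']
    field_simp

private lemma logDeriv_eval (Q : ℂ[X]) (hQ : Q ≠ 0) (ζ : ℂ) (hζ : Q.eval ζ ≠ 0) :
    Q.derivative.eval ζ / Q.eval ζ = ((Q.roots.map (fun r => (ζ - r)⁻¹)).sum) := by
  have hsplit : Q = C Q.leadingCoeff * (Multiset.map (fun a => X - C a) Q.roots).prod :=
    (C_leadingCoeff_mul_prod_multiset_X_sub_C IsAlgClosed.card_roots_eq_natDegree).symm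
  have hroots : ∀ r ∈ Q.roots, ζ - r ≠ 0 := by
    intro r hr
    have hr0 : Q.eval r = 0 := (mem_roots'.1 hr).2
    intro hcon
    have : ζ = r := sub_eq_zero.1 hcon
    exact hζ (this ▸ hr0)
  have hc : Q.leadingCoeff ≠ 0 := leadingCoeff_ne_zero.2 hQ
  have hev : Q.eval ζ = Q.leadingCoeff * (Q.roots.map fun r => ζ - r).prod := by
    conv_lhs => rw [hsplit]
    rw [eval_mul, eval_C, eval_multiset_prod, Multiset.map_map]
    simp [Function.comp]
  have hdv : Q.derivative.eval ζ = Q.leadingCoeff *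
      ((Q.roots.map fun r => ζ - r).prod * (Q.roots.map fun r => (ζ - r)⁻¹).sum) := by
    conv_lhs => rw [hsplit]
    rw [derivative_C_mul, eval_C_mul, deriv_multiset_prod _ _ hroots]
  have hP : (Q.roots.map fun r => ζ - r).prod ≠ 0 := by
    apply Multiset.prod_ne_zero
    intro h0
    obtain ⟨r, hr, hr0⟩ := Multiset.mem_map.1 h0
    exact hroots r hr hr0
  rw [hdv, hev]
  field_simp


private lemma dist_bound {Ω : Set ℂ} (a : ℂ) (ha : a ∉ closure Ω) :
    ∃ r > 0, ∀ ζ ∈ Ω, r ≤ ‖ζ - a‖ := by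
  have : (closure Ω)ᶜ ∈ nhds a := (isClosed_closure.isOpen_compl).mem_nhds ha
  obtain ⟨r, hr, hball⟩ := Metric.mem_nhds_iff.1 this
  refine ⟨r, hr, fun ζ hζ => ?_⟩
  by_contra hlt
  push_neg at hlt
  have : ζ ∈ Metric.ball a r := by
    rw [Metric.mem_ball, dist_eq_norm]
    exact hlt
  exact hball this (subset_closure hζ)

private lemma measurable_kernel (a b : ℂ) :
    Measurable (fun ζ : ℂ => ((ζ - a) * (starRingEnd ℂ) (ζ - b))⁻¹) := by
  have h1 : Continuous (fun ζ : ℂ => (ζ - a) * (starRingEnd ℂ) (ζ - b)) :=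
    (continuous_id.sub continuous_const).mul
      (Complex.continuous_conj.comp (continuous_id.sub continuous_const))
  exact h1.measurable.inv

private lemma integrableOn_kernel {Ω : Set ℂ} (hb : Bornology.IsBounded Ω)
    (hm : MeasurableSet Ω) (a b : ℂ) (ha : a ∉ closure Ω) (hb' : b ∉ closure Ω) :
    IntegrableOn (fun ζ => ((ζ - a) * (starRingEnd ℂ) (ζ - b))⁻¹) Ω volume := by
  obtain ⟨ra, hra, hba⟩ := dist_bound a ha
  obtain ⟨rb, hrb, hbb⟩ := dist_bound b hb'
  have hμ : volume Ω < ⊤ := hb.measure_lt_top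
  refine Integrable.mono' (g := fun _ => (ra * rb)⁻¹)
    (integrableOn_const hμ.ne) ((measurable_kernel a b).aestronglyMeasurable) ?_
  filter_upwards [self_mem_ae_restrict hm] with ζ hζ
  rw [norm_inv, norm_mul, RingHomIsometric.norm_map]
  have h1 : ra ≤ ‖ζ - a‖ := hba ζ hζ
  have h2 : rb ≤ ‖ζ - b‖ := hbb ζ hζ
  have : ra * rb ≤ ‖ζ - a‖ * ‖ζ - b‖ :=
    mul_le_mul h1 h2 (le_of_lt hrb) (norm_nonneg _)
  exact inv_anti₀ (mul_pos hra hrb) this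

private lemma sum_mul_sum_multiset (s t : Multiset ℂ) (f g : ℂ → ℂ) :
    (s.map f).sum * (t.map g).sum =
      (s.map fun a => (t.map fun b => f a * g b).sum).sum := by
  rw [← Multiset.sum_map_mul_right]
  congr 1
  apply Multiset.map_congr rfl
  intro a _
  rw [Multiset.sum_map_mul_left]

private lemma prod_map_exp (s : Multiset ℂ) (f : ℂ → ℂ) :
    (s.map fun a => Complex.exp (f a)).prod = Complex.exp ((s.map f).sum) := by
  rw [exp_multiset_sum, Multiset.map_map]
  rfl


private lemma det_restrictScalars_smulRight (c : ℂ) :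
    (((1 : ℂ →L[ℂ] ℂ).smulRight c).restrictScalars ℝ).det = Complex.normSq c := by
  have h : (((1 : ℂ →L[ℂ] ℂ).smulRight c).restrictScalars ℝ : ℂ →ₗ[ℝ] ℂ)
      = (Algebra.lmul ℝ ℂ) c := by
    ext z
    simp [Algebra.lmul, mul_comm]
  rw [ContinuousLinearMap.det, h, ← Algebra.norm_apply, Algebra.norm_complex_apply]

open scoped Classical in
private lemma key_cv (Ω₁ Ω₂ : Set ℂ)
    (h1o : IsOpen Ω₁) (h1b : Bornology.IsBounded Ω₁)
    (h2o : IsOpen Ω₂) (h2b : Bornology.IsBounded Ω₂)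
    (A B : Polynomial ℂ) (p : ℕ)
    (hD : derivative A * B - A * derivative B ≠ 0)
    (hmap : ∀ ζ ∈ Ω₁, B.eval ζ ≠ 0 ∧ A.eval ζ / B.eval ζ ∈ Ω₂)
    (hvalent : ∀ᵐ u ∂(volume.restrict Ω₂),
      Multiset.card (Multiset.filter (fun x => x ∈ Ω₁) (A - Polynomial.C u * B).roots) = p)
    (hBc : ∀ ζ ∈ closure Ω₁, B.eval ζ ≠ 0)
    (g : ℂ → ℂ) (hg : Measurable g) (M : ℝ) (hM : 0 ≤ M)
    (hgM : ∀ u ∈ Ω₂, ‖g u‖ ≤ M) :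
    (p : ℂ) * ∫ u in Ω₂, g u =
      ∫ ζ in Ω₁, ((Complex.normSq
          ((derivative A * B - A * derivative B).eval ζ / (B.eval ζ) ^ 2) : ℂ))
        * g (A.eval ζ / B.eval ζ) := by
  set D : Polynomial ℂ := derivative A * B - A * derivative B with hDdef
  set F : ℂ → ℂ := fun ζ => A.eval ζ / B.eval ζ with hFdef
  set F' : ℂ → ℂ := fun ζ => D.eval ζ / (B.eval ζ) ^ 2 with hF'def
  set S : Set ℂ := Ω₁ ∩ {ζ | D.eval ζ = 0} with hSdef
  set Ω' : Set ℂ := Ω₁ ∩ {ζ | D.eval ζ ≠ 0} with hΩ'def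
  have hΩm : MeasurableSet Ω₁ := h1o.measurableSet
  have hΩ₂m : MeasurableSet Ω₂ := h2o.measurableSet
  have hDcont : Continuous fun ζ : ℂ => D.eval ζ := D.continuous
  have hΩ'open : IsOpen Ω' := h1o.inter (isOpen_compl_singleton.preimage hDcont)
  have hΩ'm : MeasurableSet Ω' := hΩ'open.measurableSet
  have hSfin : S.Finite := by
    apply Set.Finite.subset (D.roots.toFinset : Finset ℂ).finite_toSet
    intro ζ hζ
    simp only [Finset.mem_coe, Multiset.mem_toFinset, mem_roots hD]
    exact hζ.2
  have hSnull : volume S = 0 := hSfin.measure_zero volume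
  have hdiff : Ω₁ \ Ω' ⊆ S := by
    intro ζ hζ
    refine ⟨hζ.1, ?_⟩
    by_contra hcon
    exact hζ.2 ⟨hζ.1, hcon⟩
  have hacongr : Ω' =ᵐ[volume] Ω₁ := by
    rw [MeasureTheory.ae_eq_set]
    constructor
    · rw [Set.diff_eq_empty.2 Set.inter_subset_left]; exact measure_empty
    · exact measure_mono_null hdiff hSnull
  -- continuity facts
  have hFcont : ContinuousOn F Ω₁ :=
    ContinuousOn.div A.continuous.continuousOn B.continuous.continuousOn
      (fun ζ hζ => (hmap ζ hζ).1)
  have hFmeas : Measurable F := by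
    exact A.continuous.measurable.div B.continuous.measurable
  have hF'meas : Measurable F' := by
    exact hDcont.measurable.div ((B.continuous.pow 2).measurable)
  -- derivative facts
  have hFs : ∀ ζ ∈ Ω₁, HasStrictDerivAt F (F' ζ) ζ := by
    intro ζ hζ
    have := (A.hasStrictDerivAt ζ).div (B.hasStrictDerivAt ζ) (hmap ζ hζ).1
    simpa [hF'def, hDdef, eval_sub, eval_mul, hFdef, Pi.div_def] using this
  have hFd : ∀ ζ ∈ Ω₁, HasDerivAt F (F' ζ) ζ := fun ζ hζ => (hFs ζ hζ).hasDerivAt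
  -- the integrand on the source side
  set h : ℂ → ℂ := fun ζ => ((Complex.normSq (F' ζ) : ℂ)) * g (F ζ) with hhdef
  have hhmeas : Measurable h := by
    exact ((Complex.measurable_ofReal.comp
      (Complex.continuous_normSq.measurable.comp hF'meas))).mul (hg.comp hFmeas)
  -- boundedness of h on Ω₁
  have hKcomp : IsCompact (closure Ω₁) :=
    Metric.isCompact_of_isClosed_isBounded isClosed_closure h1b.closure
  have hF'contOn : ContinuousOn F' (closure Ω₁) :=
    ContinuousOn.div hDcont.continuousOn (B.continuous.pow 2).continuousOn
      (fun ζ hζ => pow_ne_zero 2 (hBc ζ hζ))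
  obtain ⟨C, hC⟩ := hKcomp.exists_bound_of_continuousOn hF'contOn
  set C₀ : ℝ := max C 0 with hC₀def
  have hhbound : ∀ ζ ∈ Ω₁, ‖h ζ‖ ≤ C₀ ^ 2 * M := by
    intro ζ hζ
    have h1 : ‖F' ζ‖ ≤ C₀ := le_trans (hC ζ (subset_closure hζ)) (le_max_left _ _)
    have h2 : ‖g (F ζ)‖ ≤ M := hgM _ (hmap ζ hζ).2
    have h3 : ‖((Complex.normSq (F' ζ) : ℂ))‖ = ‖F' ζ‖ ^ 2 := by
      rw [Complex.norm_real, Real.norm_eq_abs, abs_of_nonneg (Complex.normSq_nonneg _)]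
      simp [Complex.normSq_eq_norm_sq]
    calc ‖h ζ‖ = ‖((Complex.normSq (F' ζ) : ℂ))‖ * ‖g (F ζ)‖ := norm_mul _ _
      _ ≤ C₀ ^ 2 * M := by
          rw [h3]
          exact mul_le_mul (pow_le_pow_left₀ (norm_nonneg _) h1 2) h2 (norm_nonneg _)
            (by positivity)
  have hhint : IntegrableOn h Ω₁ volume := by
    refine Integrable.mono' (g := fun _ => C₀ ^ 2 * M)
      (integrableOn_const h1b.measure_lt_top.ne) hhmeas.aestronglyMeasurable ?_
    filter_upwards [self_mem_ae_restrict hΩm] with ζ hζ using hhbound ζ hζ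
  rcases Set.eq_empty_or_nonempty Ω' with hΩ'e | hΩ'ne
  · -- degenerate case : Ω₁ must be empty
    have hΩ₁S : Ω₁ ⊆ S := by
      intro ζ hζ
      by_contra hcon
      have : ζ ∈ Ω' := ⟨hζ, fun h0 => hcon ⟨hζ, h0⟩⟩
      rw [hΩ'e] at this
      exact this
    have hΩ₁e : Ω₁ = ∅ := by
      by_contra hne
      have hpos : (0 : ℝ≥0∞) < volume Ω₁ :=
        h1o.measure_pos volume (Set.nonempty_iff_ne_empty.2 hne)
      exact hpos.ne' (le_antisymm (le_trans (measure_mono hΩ₁S) hSnull.le) zero_le)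
    rw [hΩ₁e]
    simp only [Measure.restrict_empty, integral_zero_measure]
    by_cases hp0 : p = 0
    · simp [hp0]
    · have hae : ∀ᵐ u ∂(volume.restrict Ω₂), False := by
        filter_upwards [hvalent] with u hu
        rw [hΩ₁e] at hu
        simp only [Set.mem_empty_iff_false, Multiset.filter_eq_nil] at hu
        apply hp0
        rw [← hu]
        simp [Multiset.filter_eq_nil]
      have h0 : volume.restrict Ω₂ = 0 := by
        have := ae_iff.1 hae
        simpa [Measure.measure_univ_eq_zero] using this
      rw [show (∫ u in Ω₂, g u) = 0 by rw [h0]; exact integral_zero_measure g]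
      ring
  · -- main case
    have hcov : ∀ ζ ∈ Ω', ∃ V : Set ℂ, IsOpen V ∧ ζ ∈ V ∧ V ⊆ Ω' ∧ Set.InjOn F V := by
      intro ζ hζ
      have hs := hFs ζ hζ.1
      have hne : F' ζ ≠ 0 :=
        div_ne_zero hζ.2 (pow_ne_zero 2 (hmap ζ hζ.1).1)
      have hsf : HasStrictFDerivAt F ((ContinuousLinearEquiv.unitsEquivAut ℂ (Units.mk0 (F' ζ) hne) : ℂ →L[ℂ] ℂ)) ζ := hs.hasStrictFDerivAt_equiv hne
      refine ⟨(hsf.toOpenPartialHomeomorph F).source ∩ Ω',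
        ((hsf.toOpenPartialHomeomorph F).open_source).inter hΩ'open,
        ⟨hsf.mem_toOpenPartialHomeomorph_source, hζ⟩, Set.inter_subset_right, ?_⟩
      have hinj : Set.InjOn F (hsf.toOpenPartialHomeomorph F).source := by
        have := (hsf.toOpenPartialHomeomorph F).injOn
        rwa [HasStrictFDerivAt.toOpenPartialHomeomorph_coe] at this
      exact hinj.mono Set.inter_subset_left
    choose! U hUo hUmem hUsub hUinj using hcov
    obtain ⟨T, hTc, hTeq⟩ :=
      TopologicalSpace.isOpen_iUnion_countable (fun x : Ω' => U ↑x)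
        (fun x => hUo ↑x x.2)
    have hUnion : ⋃ x : Ω', U ↑x = Ω' := by
      apply Set.Subset.antisymm
      · exact Set.iUnion_subset (fun x => hUsub ↑x x.2)
      · intro ζ hζ
        exact Set.mem_iUnion.2 ⟨⟨ζ, hζ⟩, hUmem ζ hζ⟩
    have hTne : T.Nonempty := by
      obtain ⟨ζ, hζ⟩ := hΩ'ne
      have : ζ ∈ ⋃ i ∈ T, U ↑i := by rw [hTeq, hUnion]; exact hζ
      obtain ⟨i, hi, _⟩ := Set.mem_iUnion₂.1 this
      exact ⟨i, hi⟩
    obtain ⟨fseq, hfseq⟩ := hTc.exists_eq_range hTne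
    set e : ℕ → Set ℂ := fun k => U ↑(fseq k) with hedef
    have heU : ⋃ k, e k = Ω' := by
      have : ⋃ k, e k = ⋃ i ∈ T, U ↑i := by
        rw [hfseq]
        exact (Set.biUnion_range (f := fseq) (g := fun i => U ↑i)).symm
      rw [this, hTeq, hUnion]
    have heo : ∀ k, IsOpen (e k) := fun k => hUo ↑(fseq k) (fseq k).2
    have hesub : ∀ k, e k ⊆ Ω' := fun k => hUsub ↑(fseq k) (fseq k).2
    have heinj : ∀ k, Set.InjOn F (e k) := fun k => hUinj ↑(fseq k) (fseq k).2
    set E : ℕ → Set ℂ := disjointed e with hEdef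
    have hEm : ∀ k, MeasurableSet (E k) :=
      MeasurableSet.disjointed (fun k => (heo k).measurableSet)
    have hEdisj : Pairwise (Function.onFun Disjoint E) := disjoint_disjointed e
    have hEsub : ∀ k, E k ⊆ e k := disjointed_subset e
    have hEU : ⋃ k, E k = Ω' := by rw [hEdef, iUnion_disjointed, heU]
    have hEinjF : ∀ k, Set.InjOn F (E k) := fun k => (heinj k).mono (hEsub k)
    have hEsubΩ' : ∀ k, E k ⊆ Ω' := fun k => (hEsub k).trans (hesub k)
    have hEsubΩ₁ : ∀ k, E k ⊆ Ω₁ := fun k => (hEsubΩ' k).trans Set.inter_subset_left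
    -- change of variables on each piece
    have himg : ∀ k, (∫ u in F '' E k, g u) = ∫ ζ in E k, h ζ := by
      intro k
      have hcv := integral_image_eq_integral_abs_det_fderiv_smul volume (hEm k)
        (f' := fun x => ((1 : ℂ →L[ℂ] ℂ).smulRight (F' x)).restrictScalars ℝ)
        (fun x hx => (((hFd x (hEsubΩ₁ k hx)).hasFDerivAt).restrictScalars ℝ).hasFDerivWithinAt)
        (hEinjF k) g
      rw [hcv]
      apply setIntegral_congr_fun (hEm k)
      intro x _
      beta_reduce
      rw [det_restrictScalars_smulRight, abs_of_nonneg (Complex.normSq_nonneg _), hhdef]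
      simp [Complex.real_smul]
    -- images are measurable subsets of Ω₂
    have hAm : ∀ k, MeasurableSet (F '' E k) := fun k =>
      (hEm k).image_of_continuousOn_injOn (hFcont.mono (hEsubΩ₁ k)) (hEinjF k)
    have hAsub : ∀ k, F '' E k ⊆ Ω₂ := by
      rintro k u ⟨ζ, hζ, rfl⟩
      exact (hmap ζ (hEsubΩ₁ k hζ)).2
    -- the counting claim
    have hFSfin : (F '' S).Finite := hSfin.image F
    have hcount : ∀ u ∈ Ω₂, u ∉ F '' S →
        Multiset.card (Multiset.filter (fun x => x ∈ Ω₁) (A - Polynomial.C u * B).roots) = p →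
        ∃ K : Finset ℕ, (∀ k, u ∈ F '' E k ↔ k ∈ K) ∧ K.card = p := by
      intro u hu hus hcard
      set Pu : Polynomial ℂ := A - Polynomial.C u * B with hPudef
      have hPu : Pu ≠ 0 := by
        intro h0
        apply hD
        have hA : A = Polynomial.C u * B := by rwa [hPudef, sub_eq_zero] at h0
        rw [hDdef, hA, derivative_C_mul]
        ring
      -- every root of Pu in Ω₁ is simple and lies in Ω'
      have hroot : ∀ a, a ∈ Ω₁ → Pu.eval a = 0 → (D.eval a ≠ 0 ∧ F a = u) := by
        intro a haΩ hae
        have hBa : B.eval a ≠ 0 := (hmap a haΩ).1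
        have hAa : A.eval a = u * B.eval a := by
          have := hae
          simp only [hPudef, eval_sub, eval_mul, eval_C, sub_eq_zero] at this
          exact this
        have hFa : F a = u := by
          rw [hFdef]
          field_simp [hAa]
          linear_combination hAa
        refine ⟨?_, hFa⟩
        intro hDa
        exact hus ⟨a, ⟨haΩ, hDa⟩, hFa⟩
      have hsimple : ∀ a ∈ Ω₁, Multiset.count a Pu.roots ≤ 1 := by
        intro a haΩ
        by_contra hcon
        push_neg at hcon
        have hmult : 2 ≤ Pu.rootMultiplicity a := by
          rw [← Pu.count_roots]; omega
        have haroot : Pu.eval a = 0 := by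
          have h1 : (1 : ℕ) ≤ Multiset.count a Pu.roots := by omega
          have := Multiset.count_pos.1 (by omega : 0 < Multiset.count a Pu.roots)
          exact (mem_roots hPu).1 this
        have hdvd : (X - Polynomial.C a) ^ 2 ∣ Pu :=
          dvd_trans (pow_dvd_pow _ hmult) (Pu.pow_rootMultiplicity_dvd a)
        obtain ⟨q, hq⟩ := hdvd
        have hder : Pu.derivative.eval a = 0 := by
          rw [hq, derivative_mul, derivative_pow]
          simp
        -- conclude D.eval a = 0, contradicting simplicity
        have hBa : B.eval a ≠ 0 := (hmap a haΩ).1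
        have hAa : A.eval a = u * B.eval a := by
          have := haroot
          simp only [hPudef, eval_sub, eval_mul, eval_C, sub_eq_zero] at this
          exact this
        have hA'a : (derivative A).eval a = u * (derivative B).eval a := by
          have : Pu.derivative = derivative A - Polynomial.C u * derivative B := by
            rw [hPudef, derivative_sub, derivative_C_mul]
          rw [this] at hder
          simp only [eval_sub, eval_mul, eval_C, sub_eq_zero] at hder
          exact hder
        have hDa : D.eval a = 0 := by
          rw [hDdef]
          simp only [eval_sub, eval_mul, hAa, hA'a]
          ring
        exact (hroot a haΩ haroot).1 hDa
      have hnodup : (Multiset.filter (fun x => x ∈ Ω₁) Pu.roots).Nodup := by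
        rw [Multiset.nodup_iff_count_le_one]
        intro a
        by_cases haΩ : a ∈ Ω₁
        · rw [Multiset.count_filter]
          simp only [haΩ, if_true]
          exact hsimple a haΩ
        · rw [Multiset.count_filter]
          simp [haΩ]
      set R : Finset ℂ := (Multiset.filter (fun x => x ∈ Ω₁) Pu.roots).toFinset with hRdef
      have hRcard : R.card = p := by
        rw [hRdef, Multiset.toFinset_card_of_nodup hnodup]
        exact hcard
      have hRmem : ∀ a, a ∈ R ↔ (a ∈ Ω₁ ∧ F a = u) := by
        intro a
        rw [hRdef, Multiset.mem_toFinset, Multiset.mem_filter]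
        constructor
        · rintro ⟨har, haΩ⟩
          exact ⟨haΩ, (hroot a haΩ ((mem_roots hPu).1 har)).2⟩
        · rintro ⟨haΩ, haF⟩
          have hBa : B.eval a ≠ 0 := (hmap a haΩ).1
          have : Pu.eval a = 0 := by
            simp only [hPudef, eval_sub, eval_mul, eval_C, sub_eq_zero]
            rw [hFdef] at haF
            field_simp at haF
            linear_combination haF
          exact ⟨(mem_roots hPu).2 this, haΩ⟩
      have hRΩ' : ∀ a ∈ R, a ∈ Ω' := by
        intro a haR
        obtain ⟨haΩ, haF⟩ := (hRmem a).1 haR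
        have : Pu.eval a = 0 := by
          simp only [hPudef, eval_sub, eval_mul, eval_C, sub_eq_zero]
          have hBa : B.eval a ≠ 0 := (hmap a haΩ).1
          rw [hFdef] at haF
          field_simp at haF
          linear_combination haF
        exact ⟨haΩ, (hroot a haΩ this).1⟩
      -- assign to each root the unique piece containing it
      have hφex : ∀ a ∈ R, ∃ k, a ∈ E k := by
        intro a haR
        have : a ∈ ⋃ k, E k := by rw [hEU]; exact hRΩ' a haR
        exact Set.mem_iUnion.1 this
      set φ : ℂ → ℕ := fun a => if hh : ∃ k, a ∈ E k then hh.choose else 0 with hφdef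
      have hφmem : ∀ a ∈ R, a ∈ E (φ a) := by
        intro a haR
        have hh := hφex a haR
        rw [hφdef]
        simp only [hh, dif_pos]
        exact hh.choose_spec
      set K : Finset ℕ := R.image φ with hKdef
      have hKcard : K.card = p := by
        rw [hKdef, Finset.card_image_of_injOn, hRcard]
        intro a ha b hb hab
        have haE : a ∈ E (φ a) := hφmem a ha
        have hbE : b ∈ E (φ a) := hab ▸ hφmem b hb
        have hFa : F a = u := ((hRmem a).1 ha).2
        have hFb : F b = u := ((hRmem b).1 hb).2
        exact hEinjF (φ a) haE hbE (by rw [hFa, hFb])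
      refine ⟨K, ?_, hKcard⟩
      intro k
      constructor
      · rintro ⟨ζ, hζE, hζF⟩
        have hζR : ζ ∈ R := (hRmem ζ).2 ⟨hEsubΩ₁ k hζE, hζF⟩
        have hζE' : ζ ∈ E (φ ζ) := hφmem ζ hζR
        have hkeq : φ ζ = k := by
          by_contra hne
          exact Set.disjoint_left.1 (hEdisj hne) hζE' hζE
        rw [hKdef]
        exact Finset.mem_image.2 ⟨ζ, hζR, hkeq⟩
      · intro hk
        obtain ⟨a, haR, hak⟩ := Finset.mem_image.1 (hKdef ▸ hk)
        exact ⟨a, hak ▸ hφmem a haR, ((hRmem a).1 haR).2⟩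
    set μ₂ := volume.restrict Ω₂ with hμ₂def
    set f : ℕ → ℂ → ℂ := fun k => (F '' E k).indicator g with hfdef
    have haeS : ∀ᵐ u ∂μ₂, u ∉ F '' S := by
      apply ae_restrict_of_ae
      have h0 : volume (F '' S) = 0 := hFSfin.measure_zero volume
      rw [ae_iff]
      simpa only [not_not, Set.setOf_mem_eq] using h0
    have haeK : ∀ᵐ u ∂μ₂, ∃ K : Finset ℕ,
        (∀ k, u ∈ F '' E k ↔ k ∈ K) ∧ K.card = p := by
      filter_upwards [ae_restrict_mem hΩ₂m, haeS, hvalent] with u h1 h2 h3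
      exact hcount u h1 h2 h3
    have htsum : ∀ᵐ u ∂μ₂, ∑' k, f k u = (p : ℂ) * g u := by
      filter_upwards [haeK] with u hK
      obtain ⟨K, hKmem, hKcard⟩ := hK
      have hzero : ∀ k ∉ K, f k u = 0 := fun k hk =>
        Set.indicator_of_notMem (fun hmem => hk ((hKmem k).1 hmem)) g
      rw [tsum_eq_sum hzero]
      have hval : ∀ k ∈ K, f k u = g u := fun k hk =>
        Set.indicator_of_mem ((hKmem k).2 hk) g
      rw [Finset.sum_congr rfl hval, Finset.sum_const, hKcard]
      simp [nsmul_eq_mul]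
    have hfmeas : ∀ k, AEStronglyMeasurable (f k) μ₂ := fun k =>
      (hg.indicator (hAm k)).aestronglyMeasurable
    have hlin : ∑' k, ∫⁻ u, ‖f k u‖₊ ∂μ₂ ≠ ⊤ := by
      have heq : ∑' k, ∫⁻ u, (‖f k u‖₊ : ℝ≥0∞) ∂μ₂ =
          ∫⁻ u, ∑' k, (‖f k u‖₊ : ℝ≥0∞) ∂μ₂ := by
        refine (lintegral_tsum (fun k => ?_)).symm
        exact ((hg.indicator (hAm k)).nnnorm.coe_nnreal_ennreal).aemeasurable
      rw [heq]
      have hb : ∀ᵐ u ∂μ₂, ∑' k, (‖f k u‖₊ : ℝ≥0∞) ≤ (p : ℝ≥0∞) * ENNReal.ofReal M := by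
        filter_upwards [haeK, ae_restrict_mem hΩ₂m] with u hK huΩ
        obtain ⟨K, hKmem, hKcard⟩ := hK
        have hzero : ∀ k ∉ K, (‖f k u‖₊ : ℝ≥0∞) = 0 := by
          intro k hk
          rw [hfdef]
          simp [Set.indicator_of_notMem (fun hmem => hk ((hKmem k).1 hmem)) g]
        rw [tsum_eq_sum hzero]
        have hbound : ∀ k ∈ K, (‖f k u‖₊ : ℝ≥0∞) ≤ ENNReal.ofReal M := by
          intro k hk
          rw [← enorm_eq_nnnorm, ← ofReal_norm]
          apply ENNReal.ofReal_le_ofReal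
          exact le_trans (norm_indicator_le_norm_self g u) (hgM u huΩ)
        calc ∑ k ∈ K, (‖f k u‖₊ : ℝ≥0∞) ≤ ∑ _k ∈ K, ENNReal.ofReal M :=
              Finset.sum_le_sum hbound
          _ = (K.card : ℝ≥0∞) * ENNReal.ofReal M := by
              rw [Finset.sum_const, nsmul_eq_mul]
          _ = (p : ℝ≥0∞) * ENNReal.ofReal M := by rw [hKcard]
      refine ne_top_of_lt (b := (p : ℝ≥0∞) * ENNReal.ofReal M * μ₂ Set.univ + 1) ?_
      calc ∫⁻ u, ∑' k, (‖f k u‖₊ : ℝ≥0∞) ∂μ₂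
          ≤ ∫⁻ _u, (p : ℝ≥0∞) * ENNReal.ofReal M ∂μ₂ := lintegral_mono_ae hb
        _ = (p : ℝ≥0∞) * ENNReal.ofReal M * μ₂ Set.univ := lintegral_const _
        _ < (p : ℝ≥0∞) * ENNReal.ofReal M * μ₂ Set.univ + 1 :=
            ENNReal.lt_add_right (by
              rw [hμ₂def, Measure.restrict_apply_univ]
              exact (ENNReal.mul_lt_top
                (ENNReal.mul_lt_top (ENNReal.natCast_lt_top p) ENNReal.ofReal_lt_top)
                h2b.measure_lt_top).ne) one_ne_zero
    have hpiece : ∀ k, (∫ u, f k u ∂μ₂) = ∫ ζ in E k, h ζ := by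
      intro k
      have h1 : (∫ u, f k u ∂μ₂) = ∫ u in F '' E k, g u ∂μ₂ := by
        rw [hfdef]
        exact integral_indicator (hAm k)
      have h2 : μ₂.restrict (F '' E k) = volume.restrict (F '' E k) := by
        rw [hμ₂def, Measure.restrict_restrict (hAm k),
          Set.inter_eq_self_of_subset_left (hAsub k)]
      rw [h1, show (∫ u in F '' E k, g u ∂μ₂) = ∫ u in F '' E k, g u by rw [h2]]
      exact himg k
    have hintU : IntegrableOn h (⋃ k, E k) volume := by
      rw [hEU]
      exact hhint.mono_set Set.inter_subset_left
    calc (p : ℂ) * ∫ u in Ω₂, g u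
        = ∫ u, (p : ℂ) * g u ∂μ₂ := (integral_const_mul _ _).symm
      _ = ∫ u, ∑' k, f k u ∂μ₂ := (integral_congr_ae (htsum.mono fun u hu => hu.symm))
      _ = ∑' k, ∫ u, f k u ∂μ₂ := integral_tsum hfmeas hlin
      _ = ∑' k, ∫ ζ in E k, h ζ := tsum_congr hpiece
      _ = ∫ ζ in ⋃ k, E k, h ζ := (integral_iUnion hEm hEdisj hintU).symm
      _ = ∫ ζ in Ω', h ζ := by rw [hEU]
      _ = ∫ ζ in Ω₁, h ζ := setIntegral_congr_set hacongr

end Helpers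

set_option maxHeartbeats 2000000 in
open scoped Classical in
/-- Behaviour of the exponential transform under a `p`-valent proper rational map
`F = A/B : Ω₁ → Ω₂`: `E_{Ω₂}(z,w)^p = E_{Ω₁}(D_z, D_w)` where `D_u` is the divisor
of `F − u`, i.e. `roots(A − uB) − roots(B)`. -/
theorem expTransform_rational_map (Ω₁ Ω₂ : Set ℂ)
    (h1o : IsOpen Ω₁) (h1b : Bornology.IsBounded Ω₁)
    (h2o : IsOpen Ω₂) (h2b : Bornology.IsBounded Ω₂)
    (A B : Polynomial ℂ) (hcop : IsCoprime A B) (hB : B ≠ 0)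
    (hdeg : A.natDegree ≤ B.natDegree)
    (p : ℕ) (hp : 1 ≤ p)
    (hmap : ∀ ζ ∈ Ω₁, B.eval ζ ≠ 0 ∧ A.eval ζ / B.eval ζ ∈ Ω₂)
    (hvalent : ∀ᵐ u ∂(volume.restrict Ω₂),
      Multiset.card (Multiset.filter (fun x => x ∈ Ω₁) (A - Polynomial.C u * B).roots) = p)
    (z w : ℂ) (hz : z ∉ closure Ω₂) (hw : w ∉ closure Ω₂)
    (hdz : (A - Polynomial.C z * B).natDegree = B.natDegree)
    (hdw : (A - Polynomial.C w * B).natDegree = B.natDegree)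
    (hrz : ∀ α ∈ (A - Polynomial.C z * B).roots, α ∉ closure Ω₁)
    (hrw : ∀ γ ∈ (A - Polynomial.C w * B).roots, γ ∉ closure Ω₁)
    (hrB : ∀ β ∈ B.roots, β ∉ closure Ω₁) :
    expTransform Ω₂ z w ^ p =
      ((((A - Polynomial.C z * B).roots.map (fun α =>
            ((A - Polynomial.C w * B).roots.map (fun γ => expTransform Ω₁ α γ)).prod)).prod *
        (B.roots.map (fun β =>
            (B.roots.map (fun δ => expTransform Ω₁ β δ)).prod)).prod) /
      ((((A - Polynomial.C z * B).roots.map (fun α =>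
            (B.roots.map (fun δ => expTransform Ω₁ α δ)).prod)).prod) *
        (B.roots.map (fun β =>
            ((A - Polynomial.C w * B).roots.map (fun γ => expTransform Ω₁ β γ)).prod)).prod)) := by
  by_cases hD0 : derivative A * B - A * derivative B = 0
  · -- degenerate case: A and B are constants, so Ω₂ (hence Ω₁) is empty
    have hconst : ∃ a b : ℂ, b ≠ 0 ∧ A = Polynomial.C a ∧ B = Polynomial.C b := by
      by_cases hA0 : A = 0
      · have hU : IsUnit B := isCoprime_zero_left.1 (hA0 ▸ hcop)
        obtain ⟨r, hr, hrB'⟩ := Polynomial.isUnit_iff.1 hU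
        exact ⟨0, r, hr.ne_zero, by rw [hA0, map_zero], hrB'.symm⟩
      · have heq : derivative A * B = A * derivative B := sub_eq_zero.1 hD0
        have hAdvd : A ∣ derivative A * B := ⟨derivative B, heq⟩
        have hA'dvd : A ∣ derivative A := hcop.dvd_of_dvd_mul_right hAdvd
        have hA' : derivative A = 0 := by
          by_contra hcon
          exact absurd (Polynomial.degree_le_of_dvd hA'dvd hcon)
            (not_le.2 (Polynomial.degree_derivative_lt hA0))
        have hB' : derivative B = 0 := by
          rw [hA', zero_mul] at heq
          rcases mul_eq_zero.1 heq.symm with h | h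
          · exact absurd h hA0
          · exact h
        refine ⟨A.coeff 0, B.coeff 0, ?_, ?_, ?_⟩
        · intro hc
          apply hB
          rw [Polynomial.eq_C_of_natDegree_eq_zero
            (Polynomial.natDegree_eq_zero_of_derivative_eq_zero hB'), hc, map_zero]
        · exact Polynomial.eq_C_of_natDegree_eq_zero
            (Polynomial.natDegree_eq_zero_of_derivative_eq_zero hA')
        · exact Polynomial.eq_C_of_natDegree_eq_zero
            (Polynomial.natDegree_eq_zero_of_derivative_eq_zero hB')
    obtain ⟨a, b, hb0, hAe, hBe⟩ := hconst
    have hroots0 : ∀ u : ℂ, (A - Polynomial.C u * B).roots = 0 := by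
      intro u
      rw [hAe, hBe, ← Polynomial.C_mul, ← Polynomial.C_sub]
      exact Polynomial.roots_C _
    have hΩ₂e : Ω₂ = ∅ := by
      by_contra hne
      have hpos : (0 : ℝ≥0∞) < volume Ω₂ :=
        h2o.measure_pos volume (Set.nonempty_iff_ne_empty.2 hne)
      have hfalse : ∀ᵐ u ∂(volume.restrict Ω₂), False := by
        filter_upwards [hvalent] with u hu
        rw [hroots0 u] at hu
        simp at hu
        omega
      rw [ae_iff] at hfalse
      simp only [not_false_iff, Set.setOf_true] at hfalse
      rw [Measure.restrict_apply_univ] at hfalse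
      exact hpos.ne' hfalse
    have hΩ₁e : Ω₁ = ∅ := by
      rw [Set.eq_empty_iff_forall_notMem]
      intro ζ hζ
      have := (hmap ζ hζ).2
      rw [hΩ₂e] at this
      exact this
    have hBr : B.roots = 0 := by rw [hBe]; exact Polynomial.roots_C _
    rw [hΩ₂e, hroots0 z, hroots0 w, hBr]
    simp [expTransform, Measure.restrict_empty]
  · -- main case
    have hPz0 : (A - Polynomial.C z * B) ≠ 0 := by
      intro h0
      apply hD0
      have hA : A = Polynomial.C z * B := sub_eq_zero.1 h0
      rw [hA, derivative_C_mul]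
      ring
    have hPw0 : (A - Polynomial.C w * B) ≠ 0 := by
      intro h0
      apply hD0
      have hA : A = Polynomial.C w * B := sub_eq_zero.1 h0
      rw [hA, derivative_C_mul]
      ring
    have hBc : ∀ ζ ∈ closure Ω₁, B.eval ζ ≠ 0 := by
      intro ζ hζ h0
      exact hrB ζ ((mem_roots hB).2 h0) hζ
    obtain ⟨rz, hrz0, hrzb⟩ := dist_bound (Ω := Ω₂) z hz
    obtain ⟨rw', hrw0, hrwb⟩ := dist_bound (Ω := Ω₂) w hw
    set g : ℂ → ℂ := fun u => ((u - z) * (starRingEnd ℂ) (u - w))⁻¹ with hgdef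
    have hgm : Measurable g := measurable_kernel z w
    have hgM : ∀ u ∈ Ω₂, ‖g u‖ ≤ (rz * rw')⁻¹ := by
      intro u hu
      rw [hgdef]
      beta_reduce
      rw [norm_inv, norm_mul, RingHomIsometric.norm_map]
      exact inv_anti₀ (mul_pos hrz0 hrw0)
        (mul_le_mul (hrzb u hu) (hrwb u hu) hrw0.le (norm_nonneg _))
    have hkey := key_cv Ω₁ Ω₂ h1o h1b h2o h2b A B p hD0 hmap hvalent hBc g hgm
      ((rz * rw')⁻¹) (by positivity) hgM
    -- the sums of simple fractions
    set SB : ℂ → ℂ := fun ζ => (B.roots.map fun r => (ζ - r)⁻¹).sum with hSBdef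
    set Sz : ℂ → ℂ := fun ζ => ((A - Polynomial.C z * B).roots.map fun r => (ζ - r)⁻¹).sum
      with hSzdef
    set Sw : ℂ → ℂ := fun ζ => ((A - Polynomial.C w * B).roots.map fun r => (ζ - r)⁻¹).sum
      with hSwdef
    have hpoint : ∀ ζ ∈ Ω₁,
        ((Complex.normSq
            ((derivative A * B - A * derivative B).eval ζ / (B.eval ζ) ^ 2) : ℂ))
          * g (A.eval ζ / B.eval ζ)
        = (Sz ζ - SB ζ) * (starRingEnd ℂ) (Sw ζ - SB ζ) := by
      intro ζ hζ
      have hBζ : B.eval ζ ≠ 0 := (hmap ζ hζ).1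
      have hFΩ : A.eval ζ / B.eval ζ ∈ Ω₂ := (hmap ζ hζ).2
      have hPzζ : (A - Polynomial.C z * B).eval ζ ≠ 0 := by
        intro h0
        apply hz
        apply subset_closure
        have h1 : A.eval ζ = z * B.eval ζ := by
          simpa [eval_sub, eval_mul, eval_C, sub_eq_zero] using h0
        have h2 : A.eval ζ / B.eval ζ = z := by rw [h1, mul_div_assoc, div_self hBζ, mul_one]
        rwa [← h2]
      have hPwζ : (A - Polynomial.C w * B).eval ζ ≠ 0 := by
        intro h0
        apply hw
        apply subset_closure
        have h1 : A.eval ζ = w * B.eval ζ := by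
          simpa [eval_sub, eval_mul, eval_C, sub_eq_zero] using h0
        have h2 : A.eval ζ / B.eval ζ = w := by rw [h1, mul_div_assoc, div_self hBζ, mul_one]
        rwa [← h2]
      have hlz := logDeriv_eval _ hPz0 ζ hPzζ
      have hlw := logDeriv_eval _ hPw0 ζ hPwζ
      have hlB := logDeriv_eval _ hB ζ hBζ
      have e1 : Sz ζ - SB ζ =
          (derivative A * B - A * derivative B).eval ζ
            / ((A - Polynomial.C z * B).eval ζ * B.eval ζ) := by
        simp only [hSzdef, hSBdef]
        rw [← hlz, ← hlB]
        have hdz' : derivative (A - Polynomial.C z * B)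
            = derivative A - Polynomial.C z * derivative B := by
          rw [derivative_sub, derivative_C_mul]
        rw [hdz']
        have hne1 : A.eval ζ - z * B.eval ζ ≠ 0 := by
          simpa [eval_sub, eval_mul, eval_C] using hPzζ
        simp only [eval_sub, eval_mul, eval_C]
        field_simp
        ring
      have e2 : Sw ζ - SB ζ =
          (derivative A * B - A * derivative B).eval ζ
            / ((A - Polynomial.C w * B).eval ζ * B.eval ζ) := by
        simp only [hSwdef, hSBdef]
        rw [← hlw, ← hlB]
        have hdw' : derivative (A - Polynomial.C w * B)
            = derivative A - Polynomial.C w * derivative B := by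
          rw [derivative_sub, derivative_C_mul]
        rw [hdw']
        have hne1 : A.eval ζ - w * B.eval ζ ≠ 0 := by
          simpa [eval_sub, eval_mul, eval_C] using hPwζ
        simp only [eval_sub, eval_mul, eval_C]
        field_simp
        ring
      rw [e1, e2, hgdef]
      beta_reduce
      have hFz : A.eval ζ / B.eval ζ - z = (A - Polynomial.C z * B).eval ζ / B.eval ζ := by
        rw [eval_sub, eval_mul, eval_C]
        field_simp
      have hFw : A.eval ζ / B.eval ζ - w = (A - Polynomial.C w * B).eval ζ / B.eval ζ := by
        rw [eval_sub, eval_mul, eval_C]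
        field_simp
      rw [hFz, hFw, ← Complex.mul_conj]
      exact conj_div_identity _ _ _ _ hBζ hPzζ hPwζ
    have hstep1 : (p : ℂ) * ∫ u in Ω₂, g u =
        ∫ ζ in Ω₁, (Sz ζ - SB ζ) * (starRingEnd ℂ) (Sw ζ - SB ζ) := by
      rw [hkey]
      exact setIntegral_congr_fun h1o.measurableSet hpoint
    set κ : ℂ → ℂ → ℂ → ℂ := fun a b ζ => ((ζ - a) * (starRingEnd ℂ) (ζ - b))⁻¹ with hκdef
    have hexp : ∀ ζ, (Sz ζ - SB ζ) * (starRingEnd ℂ) (Sw ζ - SB ζ) =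
        ((A - Polynomial.C z * B).roots.map fun a =>
          ((A - Polynomial.C w * B).roots.map fun b => κ a b ζ).sum).sum
        - ((A - Polynomial.C z * B).roots.map fun a =>
          (B.roots.map fun b => κ a b ζ).sum).sum
        - (B.roots.map fun a =>
          ((A - Polynomial.C w * B).roots.map fun b => κ a b ζ).sum).sum
        + (B.roots.map fun a => (B.roots.map fun b => κ a b ζ).sum).sum := by
      intro ζ
      have hconjsum : ∀ (s : Multiset ℂ),
          (starRingEnd ℂ) ((s.map fun r => (ζ - r)⁻¹).sum)
            = (s.map fun r => ((starRingEnd ℂ) (ζ - r))⁻¹).sum := by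
        intro s
        rw [map_multiset_sum, Multiset.map_map]
        apply congrArg
        apply Multiset.map_congr rfl
        intro r _
        simp [map_inv₀]
      have hmulsum : ∀ (s t : Multiset ℂ),
          (s.map fun r => (ζ - r)⁻¹).sum * (t.map fun r => ((starRingEnd ℂ) (ζ - r))⁻¹).sum
            = (s.map fun a => (t.map fun b => κ a b ζ).sum).sum := by
        intro s t
        rw [sum_mul_sum_multiset]
        apply congrArg
        apply Multiset.map_congr rfl
        intro a _
        apply congrArg
        apply Multiset.map_congr rfl
        intro b _
        rw [hκdef]
        beta_reduce
        rw [mul_inv]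
      simp only [hSzdef, hSwdef, hSBdef]
      rw [map_sub, hconjsum, hconjsum]
      rw [sub_mul, mul_sub, mul_sub]
      rw [hmulsum, hmulsum, hmulsum, hmulsum]
      ring
    have hnest : ∀ (s t : Multiset ℂ), (∀ a ∈ s, a ∉ closure Ω₁) →
        (∀ b ∈ t, b ∉ closure Ω₁) →
        Integrable (fun ζ => (s.map fun a => (t.map fun b => κ a b ζ).sum).sum)
            (volume.restrict Ω₁) ∧
        (∫ ζ in Ω₁, (s.map fun a => (t.map fun b => κ a b ζ).sum).sum) =
          (s.map fun a => (t.map fun b => ∫ ζ in Ω₁, κ a b ζ).sum).sum := by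
      intro s t hs ht
      have inner : ∀ a ∈ s,
          Integrable (fun ζ => (t.map fun b => κ a b ζ).sum) (volume.restrict Ω₁) ∧
          (∫ ζ in Ω₁, (t.map fun b => κ a b ζ).sum) =
            (t.map fun b => ∫ ζ in Ω₁, κ a b ζ).sum := by
        intro a ha
        exact multiset_integral_sum (volume.restrict Ω₁) t (fun b ζ => κ a b ζ)
          (fun b hb => integrableOn_kernel h1b h1o.measurableSet a b (hs a ha) (ht b hb))
      obtain ⟨hint, heq⟩ := multiset_integral_sum (volume.restrict Ω₁) s
        (fun a ζ => (t.map fun b => κ a b ζ).sum) (fun a ha => (inner a ha).1)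
      refine ⟨hint, heq.trans ?_⟩
      apply congrArg
      apply Multiset.map_congr rfl
      intro a ha
      exact (inner a ha).2
    have h11 := hnest (A - Polynomial.C z * B).roots (A - Polynomial.C w * B).roots hrz hrw
    have h12 := hnest (A - Polynomial.C z * B).roots B.roots hrz hrB
    have h21 := hnest B.roots (A - Polynomial.C w * B).roots hrB hrw
    have h22 := hnest B.roots B.roots hrB hrB
    have hstep2 : (∫ ζ in Ω₁, (Sz ζ - SB ζ) * (starRingEnd ℂ) (Sw ζ - SB ζ)) =
        ((A - Polynomial.C z * B).roots.map fun a =>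
          ((A - Polynomial.C w * B).roots.map fun b => ∫ ζ in Ω₁, κ a b ζ).sum).sum
        - ((A - Polynomial.C z * B).roots.map fun a =>
          (B.roots.map fun b => ∫ ζ in Ω₁, κ a b ζ).sum).sum
        - (B.roots.map fun a =>
          ((A - Polynomial.C w * B).roots.map fun b => ∫ ζ in Ω₁, κ a b ζ).sum).sum
        + (B.roots.map fun a => (B.roots.map fun b => ∫ ζ in Ω₁, κ a b ζ).sum).sum := by
      simp only [hexp]
      have q1 : (∫ ζ in Ω₁, (((A - Polynomial.C z * B).roots.map fun a => ((A - Polynomial.C w * B).roots.map fun b => κ a b ζ).sum).sum - ((A - Polynomial.C z * B).roots.map fun a => (B.roots.map fun b => κ a b ζ).sum).sum - (B.roots.map fun a => ((A - Polynomial.C w * B).roots.map fun b => κ a b ζ).sum).sum + (B.roots.map fun a => (B.roots.map fun b => κ a b ζ).sum).sum)) =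
          (∫ ζ in Ω₁, (((A - Polynomial.C z * B).roots.map fun a => ((A - Polynomial.C w * B).roots.map fun b => κ a b ζ).sum).sum - ((A - Polynomial.C z * B).roots.map fun a => (B.roots.map fun b => κ a b ζ).sum).sum - (B.roots.map fun a => ((A - Polynomial.C w * B).roots.map fun b => κ a b ζ).sum).sum)) + ∫ ζ in Ω₁, (B.roots.map fun a => (B.roots.map fun b => κ a b ζ).sum).sum :=
        integral_add ((h11.1.sub h12.1).sub h21.1) h22.1
      have q2 : (∫ ζ in Ω₁, (((A - Polynomial.C z * B).roots.map fun a => ((A - Polynomial.C w * B).roots.map fun b => κ a b ζ).sum).sum - ((A - Polynomial.C z * B).roots.map fun a => (B.roots.map fun b => κ a b ζ).sum).sum - (B.roots.map fun a => ((A - Polynomial.C w * B).roots.map fun b => κ a b ζ).sum).sum)) =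
          (∫ ζ in Ω₁, (((A - Polynomial.C z * B).roots.map fun a => ((A - Polynomial.C w * B).roots.map fun b => κ a b ζ).sum).sum - ((A - Polynomial.C z * B).roots.map fun a => (B.roots.map fun b => κ a b ζ).sum).sum)) - ∫ ζ in Ω₁, (B.roots.map fun a => ((A - Polynomial.C w * B).roots.map fun b => κ a b ζ).sum).sum :=
        integral_sub (h11.1.sub h12.1) h21.1
      have q3 : (∫ ζ in Ω₁, (((A - Polynomial.C z * B).roots.map fun a => ((A - Polynomial.C w * B).roots.map fun b => κ a b ζ).sum).sum - ((A - Polynomial.C z * B).roots.map fun a => (B.roots.map fun b => κ a b ζ).sum).sum)) =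
          (∫ ζ in Ω₁, ((A - Polynomial.C z * B).roots.map fun a => ((A - Polynomial.C w * B).roots.map fun b => κ a b ζ).sum).sum) - ∫ ζ in Ω₁, ((A - Polynomial.C z * B).roots.map fun a => (B.roots.map fun b => κ a b ζ).sum).sum :=
        integral_sub h11.1 h12.1
      rw [q1, q2, q3, h11.2, h12.2, h21.2, h22.2]
    have hfinal := hstep1.trans hstep2
    set c : ℂ := -(1 / (Real.pi : ℂ)) with hcdef
    have hET : ∀ a b : ℂ, expTransform Ω₁ a b =
        Complex.exp (c * ∫ ζ in Ω₁, κ a b ζ) := fun a b => rfl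
    have hprod : ∀ (s t : Multiset ℂ),
        (s.map fun a => (t.map fun b => expTransform Ω₁ a b).prod).prod
        = Complex.exp (c * (s.map fun a =>
            (t.map fun b => ∫ ζ in Ω₁, κ a b ζ).sum).sum) := by
      intro s t
      have hin : ∀ a : ℂ, (t.map fun b => expTransform Ω₁ a b).prod =
          Complex.exp (c * (t.map fun b => ∫ ζ in Ω₁, κ a b ζ).sum) := by
        intro a
        rw [Multiset.map_congr rfl (fun b _ => hET a b),
          prod_map_exp t (fun b => c * ∫ ζ in Ω₁, κ a b ζ), Multiset.sum_map_mul_left]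
      rw [Multiset.map_congr rfl (fun a _ => hin a),
        prod_map_exp s (fun a => c * (t.map fun b => ∫ ζ in Ω₁, κ a b ζ).sum),
        Multiset.sum_map_mul_left]
    rw [hprod, hprod, hprod, hprod]
    rw [← Complex.exp_add, ← Complex.exp_add, ← Complex.exp_sub]
    have hL : expTransform Ω₂ z w = Complex.exp (c * ∫ u in Ω₂, g u) := rfl
    rw [hL, ← Complex.exp_nat_mul]
    congr 1
    linear_combination c * hfinal
end

section
/- Let Ω ⊆ ℂ be a bounded open set and let z ∈ ℂ∖closure(Ω). Then lim_{|w|→∞} conj(w) · (1 − E_Ω(z,w)) = K_Ω(z), where K_Ω(z) = −(1/π) ∫_Ω 1/(ζ−z) dA(ζ) is the Cauchy transform of Ω. In particular E_Ω(z,w) = 1 − K_Ω(z)/conj(w) + O(1/|w|²) as w → ∞ with z fixed. -/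
open MeasureTheory Asymptotics

/-- The Cauchy transform `K_Ω(z) = −(1/π) ∫_Ω 1/(ζ−z) dA(ζ)`. -/
noncomputable def cauchyTransform (Ω : Set ℂ) (z : ℂ) : ℂ :=
  -(1 / (Real.pi : ℂ)) * ∫ ζ in Ω, (ζ - z)⁻¹

private lemma integrableOn_aux {s : Set ℂ} (hm : MeasurableSet s) (hvol : volume s < ⊤)
    {f : ℂ → ℂ} (hf : ContinuousOn f s) {C : ℝ} (hC : ∀ ζ ∈ s, ‖f ζ‖ ≤ C) :
    IntegrableOn f s :=
  ⟨hf.aestronglyMeasurable hm,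
    HasFiniteIntegral.restrict_of_bounded _ hvol
      ((ae_restrict_iff' hm).2 (Filter.Eventually.of_forall hC))⟩

private lemma calc_aux1 {p d x R M : ℝ} (hp : p ≠ 0) (hd : d ≠ 0) (hx : x ≠ 0) :
    (1/p) * ((d⁻¹ * R * (2/x)) * M) * x⁻¹ = (2 * M * R / (p * d)) * (x^2)⁻¹ := by
  rw [sq, mul_inv, one_div, div_eq_mul_inv, div_eq_mul_inv, mul_inv]
  ring

private lemma calc_aux2 {p d x M : ℝ} (hp : p ≠ 0) (hd : d ≠ 0) (hx : x ≠ 0) :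
    (1/p) * ((d⁻¹ * (2/x)) * M) = (2 * M / (p * d)) * x⁻¹ := by
  rw [one_div, div_eq_mul_inv, div_eq_mul_inv, mul_inv]
  ring

private lemma calc_aux3 {x c : ℝ} (hx : x ≠ 0) : x * (c * (x^2)⁻¹) = c * x⁻¹ := by
  rw [sq, mul_inv]
  field_simp

/-- Asymptotics of the exponential transform at infinity:
`lim_{|w|→∞} w̄ (1 − E_Ω(z,w)) = K_Ω(z)`, and
`E_Ω(z,w) = 1 − K_Ω(z)/w̄ + O(1/|w|²)` as `w → ∞`. -/
theorem expTransform_cauchy_asymptotics (Ω : Set ℂ) (ho : IsOpen Ω)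
    (hb : Bornology.IsBounded Ω) (z : ℂ) (hz : z ∉ closure Ω) :
    Filter.Tendsto (fun w : ℂ => (starRingEnd ℂ) w * (1 - expTransform Ω z w))
      (Bornology.cobounded ℂ) (nhds (cauchyTransform Ω z)) ∧
    (fun w : ℂ => expTransform Ω z w - (1 - cauchyTransform Ω z / (starRingEnd ℂ) w))
      =O[Bornology.cobounded ℂ] (fun w : ℂ => (‖w‖ ^ 2)⁻¹) := by
  rcases Set.eq_empty_or_nonempty Ω with hΩ | hne
  · subst hΩ
    simp only [expTransform, cauchyTransform, Measure.restrict_empty, integral_zero_measure,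
      mul_zero, Complex.exp_zero, sub_self, neg_zero, zero_div, zero_mul, sub_zero]
    constructor
    · simpa using (tendsto_const_nhds : Filter.Tendsto (fun _ : ℂ => (0:ℂ))
        (Bornology.cobounded ℂ) (nhds 0))
    · simpa using (isBigO_zero (fun w : ℂ => (‖w‖ ^ 2)⁻¹) (Bornology.cobounded ℂ) :
        (fun _ : ℂ => (0:ℂ)) =O[Bornology.cobounded ℂ] _)
  obtain ⟨R, hR⟩ := hb.exists_norm_le
  obtain ⟨ζ₀, hζ₀⟩ := hne
  have hR0 : 0 ≤ R := le_trans (norm_nonneg ζ₀) (hR ζ₀ hζ₀)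
  have hmes : MeasurableSet Ω := ho.measurableSet
  have hvol : volume Ω < ⊤ := hb.measure_lt_top
  set M : ℝ := (volume Ω).toReal with hMdef
  have hM0 : 0 ≤ M := ENNReal.toReal_nonneg
  set δ : ℝ := Metric.infDist z (closure Ω) with hδdef
  have hδ : 0 < δ :=
    (isClosed_closure.notMem_iff_infDist_pos ⟨ζ₀, subset_closure hζ₀⟩).1 hz
  have hδle : ∀ ζ ∈ Ω, δ ≤ ‖ζ - z‖ := by
    intro ζ hζ
    have h := Metric.infDist_le_dist_of_mem (x := z) (subset_closure hζ : ζ ∈ closure Ω)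
    rwa [dist_eq_norm, norm_sub_rev] at h
  have hπ : (0:ℝ) < Real.pi := Real.pi_pos
  have hzne : ∀ ζ ∈ Ω, ζ - z ≠ 0 := by
    intro ζ hζ
    refine sub_ne_zero.2 fun h => hz ?_
    exact h ▸ subset_closure hζ
  have hcont1 : ContinuousOn (fun ζ : ℂ => (ζ - z)⁻¹) Ω :=
    ((continuous_id.sub continuous_const).continuousOn).inv₀ hzne
  have hbd1 : ∀ ζ ∈ Ω, ‖(ζ - z)⁻¹‖ ≤ δ⁻¹ := by
    intro ζ hζ
    rw [norm_inv]
    exact inv_anti₀ hδ (hδle ζ hζ)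
  have hint1 : IntegrableOn (fun ζ : ℂ => (ζ - z)⁻¹) Ω := integrableOn_aux hmes hvol hcont1 hbd1
  set J : ℂ := ∫ ζ in Ω, (ζ - z)⁻¹ with hJdef
  have hKdef : cauchyTransform Ω z = -(1/(Real.pi : ℂ)) * J := rfl
  set C₂ : ℝ := 2 * M / (Real.pi * δ) with hC2def
  set C₁ : ℝ := 2 * M * R / (Real.pi * δ) with hC1def
  have hC2nn : 0 ≤ C₂ := by positivity
  have hC1nn : 0 ≤ C₁ := by positivity
  set A : ℝ := max (2*R + 1) C₂ with hAdef
  set C : ℝ := C₂^2 + C₁ with hCdef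
  clear_value M δ C₂ C₁ A C
  have hA1 : 2*R + 1 ≤ A := hAdef ▸ le_max_left _ _
  have hAC2 : C₂ ≤ A := hAdef ▸ le_max_right _ _
  have hmain : ∀ w : ℂ, A ≤ ‖w‖ →
      ‖expTransform Ω z w - (1 - cauchyTransform Ω z / (starRingEnd ℂ) w)‖
        ≤ C * (‖w‖^2)⁻¹ := by
    intro w hw
    have hw1 : (1:ℝ) ≤ ‖w‖ := by
      have := le_trans hA1 hw
      linarith
    have hwpos : (0:ℝ) < ‖w‖ := lt_of_lt_of_le zero_lt_one hw1
    have hw2R : 2*R ≤ ‖w‖ := by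
      have := le_trans hA1 hw
      linarith
    have hwC2 : C₂ ≤ ‖w‖ := le_trans hAC2 hw
    have hw0 : w ≠ 0 := by
      intro h; rw [h, norm_zero] at hwpos; exact lt_irrefl 0 hwpos
    have hcw0 : (starRingEnd ℂ) w ≠ 0 := by simpa using hw0
    have hsub : ∀ ζ ∈ Ω, ‖w‖/2 ≤ ‖ζ - w‖ := by
      intro ζ hζ
      have h1 : ‖ζ‖ ≤ R := hR ζ hζ
      have h2 : ‖w‖ - ‖ζ‖ ≤ ‖w - ζ‖ := norm_sub_norm_le w ζ
      rw [norm_sub_rev] at h2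
      linarith
    have hcwz : ∀ ζ ∈ Ω, (starRingEnd ℂ) (ζ - w) ≠ 0 := by
      intro ζ hζ
      have h1 : (0:ℝ) < ‖ζ - w‖ := lt_of_lt_of_le (by positivity) (hsub ζ hζ)
      have h2 : ζ - w ≠ 0 := by
        intro h; rw [h, norm_zero] at h1; exact lt_irrefl 0 h1
      exact fun h => h2 ((starRingEnd ℂ).injective (by rw [h, map_zero]))
    have hcwb : ∀ ζ ∈ Ω, ‖((starRingEnd ℂ) (ζ - w))⁻¹‖ ≤ 2/‖w‖ := by
      intro ζ hζ
      rw [norm_inv, RCLike.norm_conj]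
      have : (‖ζ - w‖)⁻¹ ≤ (‖w‖/2)⁻¹ := inv_anti₀ (by positivity) (hsub ζ hζ)
      rwa [inv_div] at this
    -- continuity of pieces
    have hcontc : ContinuousOn (fun ζ : ℂ => ((starRingEnd ℂ) (ζ - w))⁻¹) Ω :=
      ((Complex.continuous_conj.comp (continuous_id.sub continuous_const)).continuousOn).inv₀ hcwz
    -- the full integrand
    have hcont2 : ContinuousOn (fun ζ : ℂ => ((ζ - z) * (starRingEnd ℂ) (ζ - w))⁻¹) Ω := by
      apply ContinuousOn.inv₀
      · exact ((continuous_id.sub continuous_const).continuousOn).mul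
          ((Complex.continuous_conj.comp (continuous_id.sub continuous_const)).continuousOn)
      · exact fun ζ hζ => mul_ne_zero (hzne ζ hζ) (hcwz ζ hζ)
    have hbd2 : ∀ ζ ∈ Ω, ‖((ζ - z) * (starRingEnd ℂ) (ζ - w))⁻¹‖ ≤ δ⁻¹ * (2/‖w‖) := by
      intro ζ hζ
      rw [mul_inv, norm_mul]
      exact mul_le_mul (hbd1 ζ hζ) (hcwb ζ hζ) (norm_nonneg _) (by positivity)
    have hint2 : IntegrableOn (fun ζ : ℂ => ((ζ - z) * (starRingEnd ℂ) (ζ - w))⁻¹) Ω :=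
      integrableOn_aux hmes hvol hcont2 hbd2
    -- the remainder integrand
    have hcont3 : ContinuousOn
        (fun ζ : ℂ => (ζ - z)⁻¹ * (starRingEnd ℂ) ζ * ((starRingEnd ℂ) (ζ - w))⁻¹) Ω :=
      (hcont1.mul Complex.continuous_conj.continuousOn).mul hcontc
    have hbd3 : ∀ ζ ∈ Ω,
        ‖(ζ - z)⁻¹ * (starRingEnd ℂ) ζ * ((starRingEnd ℂ) (ζ - w))⁻¹‖
          ≤ δ⁻¹ * R * (2/‖w‖) := by
      intro ζ hζ
      rw [norm_mul, norm_mul, RCLike.norm_conj]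
      have h1 : ‖(ζ - z)⁻¹‖ * ‖ζ‖ ≤ δ⁻¹ * R :=
        mul_le_mul (hbd1 ζ hζ) (hR ζ hζ) (norm_nonneg _) (by positivity)
      exact mul_le_mul h1 (hcwb ζ hζ) (norm_nonneg _) (by positivity)
    have hint3 : IntegrableOn
        (fun ζ : ℂ => (ζ - z)⁻¹ * (starRingEnd ℂ) ζ * ((starRingEnd ℂ) (ζ - w))⁻¹) Ω :=
      integrableOn_aux hmes hvol hcont3 hbd3
    set G : ℂ := ∫ ζ in Ω, (ζ - z)⁻¹ * (starRingEnd ℂ) ζ * ((starRingEnd ℂ) (ζ - w))⁻¹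
      with hGdef
    set I : ℂ := ∫ ζ in Ω, ((ζ - z) * (starRingEnd ℂ) (ζ - w))⁻¹ with hIdef
    -- pointwise identity
    have hid : Set.EqOn (fun ζ : ℂ => ((ζ - z) * (starRingEnd ℂ) (ζ - w))⁻¹)
        (fun ζ : ℂ => -((ζ - z)⁻¹ * ((starRingEnd ℂ) w)⁻¹)
          + (ζ - z)⁻¹ * (starRingEnd ℂ) ζ * ((starRingEnd ℂ) (ζ - w))⁻¹
            * ((starRingEnd ℂ) w)⁻¹) Ω := by
      intro ζ hζ
      have h1 := hzne ζ hζ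
      have h2 := hcwz ζ hζ
      have h3 : (starRingEnd ℂ) (ζ - w) = (starRingEnd ℂ) ζ - (starRingEnd ℂ) w :=
        map_sub _ _ _
      simp only
      rw [h3] at h2 ⊢
      field_simp
      ring
    -- split the integral
    have hIsplit : I = -(J * ((starRingEnd ℂ) w)⁻¹) + G * ((starRingEnd ℂ) w)⁻¹ := by
      have h1 : IntegrableOn (fun ζ : ℂ => -((ζ - z)⁻¹ * ((starRingEnd ℂ) w)⁻¹)) Ω :=
        (hint1.mul_const _).neg
      have h3 : IntegrableOn (fun ζ : ℂ => (ζ - z)⁻¹ * (starRingEnd ℂ) ζ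
          * ((starRingEnd ℂ) (ζ - w))⁻¹ * ((starRingEnd ℂ) w)⁻¹) Ω :=
        hint3.mul_const _
      rw [hIdef, setIntegral_congr_fun hmes hid, integral_add h1 h3, integral_neg,
        integral_mul_const, integral_mul_const]
    set F : ℂ := -(1/(Real.pi : ℂ)) * I with hFdef
    have hE : expTransform Ω z w = Complex.exp F := rfl
    have hFK : F + cauchyTransform Ω z / (starRingEnd ℂ) w
        = -(1/(Real.pi : ℂ)) * G * ((starRingEnd ℂ) w)⁻¹ := by
      rw [hFdef, hIsplit, hKdef, div_eq_mul_inv]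
      ring
    have hnπ : ‖-(1/(Real.pi : ℂ))‖ = 1/Real.pi := by
      rw [norm_neg, norm_div, norm_one, Complex.norm_real, Real.norm_eq_abs,
        abs_of_pos hπ]
    have hncw : ‖((starRingEnd ℂ) w)⁻¹‖ = ‖w‖⁻¹ := by
      rw [norm_inv, RCLike.norm_conj]
    have hGbd : ‖G‖ ≤ (δ⁻¹ * R * (2/‖w‖)) * M := by
      rw [hMdef]; exact norm_setIntegral_le_of_norm_le_const hvol hbd3
    have hIbd : ‖I‖ ≤ (δ⁻¹ * (2/‖w‖)) * M := by
      rw [hMdef]; exact norm_setIntegral_le_of_norm_le_const hvol hbd2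
    have hFKbd : ‖F + cauchyTransform Ω z / (starRingEnd ℂ) w‖ ≤ C₁ * (‖w‖^2)⁻¹ := by
      rw [hFK, norm_mul, norm_mul, hnπ, hncw]
      have h1 : (1/Real.pi) * ‖G‖ * ‖w‖⁻¹
          ≤ (1/Real.pi) * ((δ⁻¹ * R * (2/‖w‖)) * M) * ‖w‖⁻¹ := by
        apply mul_le_mul_of_nonneg_right _ (by positivity)
        exact mul_le_mul_of_nonneg_left hGbd (by positivity)
      refine h1.trans (le_of_eq ?_)
      rw [hC1def]
      exact calc_aux1 (ne_of_gt Real.pi_pos) (ne_of_gt hδ) (ne_of_gt hwpos)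
    have hFbd : ‖F‖ ≤ C₂ * ‖w‖⁻¹ := by
      rw [hFdef, norm_mul, hnπ]
      have h1 : (1/Real.pi) * ‖I‖ ≤ (1/Real.pi) * ((δ⁻¹ * (2/‖w‖)) * M) :=
        mul_le_mul_of_nonneg_left hIbd (by positivity)
      refine h1.trans (le_of_eq ?_)
      rw [hC2def]
      exact calc_aux2 (ne_of_gt Real.pi_pos) (ne_of_gt hδ) (ne_of_gt hwpos)
    have hF1 : ‖F‖ ≤ 1 := by
      refine hFbd.trans ?_
      calc C₂ * ‖w‖⁻¹ ≤ ‖w‖ * ‖w‖⁻¹ :=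
            mul_le_mul_of_nonneg_right hwC2 (by positivity)
        _ = 1 := mul_inv_cancel₀ (ne_of_gt hwpos)
    have hexp : ‖Complex.exp F - 1 - F‖ ≤ ‖F‖^2 := by
      exact Complex.norm_exp_sub_one_sub_id_le hF1
    have hdecomp : expTransform Ω z w - (1 - cauchyTransform Ω z / (starRingEnd ℂ) w)
        = (Complex.exp F - 1 - F) + (F + cauchyTransform Ω z / (starRingEnd ℂ) w) := by
      rw [hE]; ring
    calc ‖expTransform Ω z w - (1 - cauchyTransform Ω z / (starRingEnd ℂ) w)‖
        ≤ ‖Complex.exp F - 1 - F‖ + ‖F + cauchyTransform Ω z / (starRingEnd ℂ) w‖ := by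
          rw [hdecomp]; exact norm_add_le _ _
      _ ≤ ‖F‖^2 + C₁ * (‖w‖^2)⁻¹ := add_le_add hexp hFKbd
      _ ≤ (C₂ * ‖w‖⁻¹)^2 + C₁ * (‖w‖^2)⁻¹ := by
          have := pow_le_pow_left₀ (norm_nonneg F) hFbd 2
          linarith
      _ = C * (‖w‖^2)⁻¹ := by
          rw [hCdef, mul_pow, ← inv_pow]
          ring
  have hev : ∀ᶠ w : ℂ in Bornology.cobounded ℂ, A ≤ ‖w‖ :=
    tendsto_norm_cobounded_atTop.eventually_ge_atTop A
  have hAbound : ∀ w : ℂ, A ≤ ‖w‖ → (0:ℝ) < ‖w‖ := by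
    intro w hw
    have := le_trans hA1 hw
    linarith
  constructor
  · rw [tendsto_iff_norm_sub_tendsto_zero]
    apply squeeze_zero' (g := fun w : ℂ => C * ‖w‖⁻¹)
      (Filter.Eventually.of_forall fun w => norm_nonneg _)
    · filter_upwards [hev] with w hw
      have hwpos := hAbound w hw
      have hw0 : w ≠ 0 := by
        intro h; rw [h, norm_zero] at hwpos; exact lt_irrefl 0 hwpos
      have hcw0 : (starRingEnd ℂ) w ≠ 0 := by simpa using hw0
      have h3 : (starRingEnd ℂ) w * (cauchyTransform Ω z / (starRingEnd ℂ) w)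
          = cauchyTransform Ω z := by
        rw [mul_comm, div_mul_cancel₀ _ hcw0]
      have hkey : (starRingEnd ℂ) w * (1 - expTransform Ω z w) - cauchyTransform Ω z
          = -((starRingEnd ℂ) w
            * (expTransform Ω z w - (1 - cauchyTransform Ω z / (starRingEnd ℂ) w))) := by
        linear_combination h3
      rw [hkey, norm_neg, norm_mul, RCLike.norm_conj]
      calc ‖w‖ * ‖expTransform Ω z w - (1 - cauchyTransform Ω z / (starRingEnd ℂ) w)‖
          ≤ ‖w‖ * (C * (‖w‖^2)⁻¹) :=
            mul_le_mul_of_nonneg_left (hmain w hw) (norm_nonneg w)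
        _ = C * ‖w‖⁻¹ := calc_aux3 (ne_of_gt hwpos)
    · have h1 : Filter.Tendsto (fun w : ℂ => ‖w‖⁻¹) (Bornology.cobounded ℂ) (nhds 0) :=
        tendsto_norm_cobounded_atTop.inv_tendsto_atTop
      simpa using h1.const_mul C
  · rw [isBigO_iff]
    refine ⟨C, ?_⟩
    filter_upwards [hev] with w hw
    have hwpos := hAbound w hw
    have h2 : ‖((‖w‖ ^ 2)⁻¹ : ℝ)‖ = (‖w‖^2)⁻¹ := by
      rw [Real.norm_eq_abs, abs_of_nonneg (by positivity)]
    rw [h2]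
    exact hmain w hw
end

section
/- Let m, n ≥ 1 and let a₁,…,a_m, b₁,…,b_m, c₁,…,c_n, d₁,…,d_n be 2m+2n pairwise distinct complex numbers. Define f(z) = ∏_{i=1}^m (z−a_i)/(z−b_i) and g(z) = ∏_{j=1}^n (z−c_j)/(z−d_j), and set Res(f,g) = ∏_{i=1}^m ∏_{j=1}^n ((a_i−c_j)(b_i−d_j))/((a_i−d_j)(b_i−c_j)), Dis(f) = ( ∏_{i≠i'} (a_i−a_{i'}) · ∏_{i≠i'} (b_i−b_{i'}) ) / ( ∏_{i,i'} (a_i−b_{i'}) · ∏_{i,i'} (b_i−a_{i'}) ), Dis(g) defined analogously with the c's and d's, and Dis(fg) defined analogously with zero list (a₁,…,a_m,c₁,…,c_n) and pole list (b₁,…,b_m,d₁,…,d_n). Then Res(f,g)² = Dis(fg) / ( Dis(f) · Dis(g) ). -/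
open Finset

lemma erase_inl_univ {α β : Type*} [Fintype α] [Fintype β] [DecidableEq α] [DecidableEq β]
    (i : α) : (univ : Finset (α ⊕ β)).erase (Sum.inl i) = (univ.erase i).disjSum univ := by
  ext x; cases x <;> simp [eq_comm]

lemma erase_inr_univ {α β : Type*} [Fintype α] [Fintype β] [DecidableEq α] [DecidableEq β]
    (j : β) : (univ : Finset (α ⊕ β)).erase (Sum.inr j) = univ.disjSum (univ.erase j) := by
  ext x; cases x <;> simp [eq_comm]

lemma prod_sub_swap {m n : ℕ} (u : Fin m → ℂ) (v : Fin n → ℂ) :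
    ∏ j, ∏ i, (v j - u i) = ((-1 : ℂ) ^ n) ^ m * ∏ i, ∏ j, (u i - v j) := by
  rw [Finset.prod_comm]
  have h : ∀ i : Fin m, ∏ j, (v j - u i) = (-1 : ℂ) ^ n * ∏ j, (u i - v j) := by
    intro i
    calc ∏ j, (v j - u i) = ∏ j, (-1 : ℂ) * (u i - v j) := by
          apply Finset.prod_congr rfl; intro j _; ring
      _ = (-1 : ℂ) ^ n * ∏ j, (u i - v j) := by
          rw [Finset.prod_mul_distrib, Finset.prod_const, Finset.card_univ, Fintype.card_fin]
  simp_rw [h]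
  rw [Finset.prod_mul_distrib, Finset.prod_const, Finset.card_univ, Fintype.card_fin]


/-- The discriminant `Dis` of a rational function with zero list `u` and pole list `v`:
`Dis = (∏_{x≠x'} (u x − u x') · ∏_{x≠x'} (v x − v x')) /
       (∏_{x,x'} (u x − v x') · ∏_{x,x'} (v x − u x'))`. -/
noncomputable def disExpr {α : Type*} [Fintype α] [DecidableEq α] (u v : α → ℂ) : ℂ :=
  ((∏ x, ∏ x' ∈ Finset.univ.erase x, (u x - u x')) *
      (∏ x, ∏ x' ∈ Finset.univ.erase x, (v x - v x'))) /
    ((∏ x, ∏ x', (u x - v x')) * (∏ x, ∏ x', (v x - u x')))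

/-- The meromorphic resultant is the polarization of the discriminant:
`Res(f,g)² = Dis(fg)/(Dis(f)·Dis(g))` for `f(z) = ∏(z−aᵢ)/(z−bᵢ)`,
`g(z) = ∏(z−cⱼ)/(z−dⱼ)` with all `2m+2n` points pairwise distinct. -/
theorem resultant_discriminant_polarization (m n : ℕ) (hm : 1 ≤ m) (hn : 1 ≤ n)
    (a b : Fin m → ℂ) (c d : Fin n → ℂ)
    (hdist : Function.Injective
      (Sum.elim (Sum.elim a b) (Sum.elim c d) : (Fin m ⊕ Fin m) ⊕ (Fin n ⊕ Fin n) → ℂ)) :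
    (∏ i, ∏ j, ((a i - c j) * (b i - d j)) / ((a i - d j) * (b i - c j))) ^ 2 =
      disExpr (Sum.elim a c) (Sum.elim b d) / (disExpr a b * disExpr c d) := by
  set E := (Sum.elim (Sum.elim a b) (Sum.elim c d) : (Fin m ⊕ Fin m) ⊕ (Fin n ⊕ Fin n) → ℂ)
  have key : ∀ p q : (Fin m ⊕ Fin m) ⊕ (Fin n ⊕ Fin n), p ≠ q → E p - E q ≠ 0 := by
    intro p q hpq h
    exact hpq (hdist (sub_eq_zero.mp h))
  have haa : ∀ i i' : Fin m, i ≠ i' → a i - a i' ≠ 0 := fun i i' h =>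
    key (.inl (.inl i)) (.inl (.inl i')) (by simp [h])
  have hbb : ∀ i i' : Fin m, i ≠ i' → b i - b i' ≠ 0 := fun i i' h =>
    key (.inl (.inr i)) (.inl (.inr i')) (by simp [h])
  have hcc : ∀ j j' : Fin n, j ≠ j' → c j - c j' ≠ 0 := fun j j' h =>
    key (.inr (.inl j)) (.inr (.inl j')) (by simp [h])
  have hdd : ∀ j j' : Fin n, j ≠ j' → d j - d j' ≠ 0 := fun j j' h =>
    key (.inr (.inr j)) (.inr (.inr j')) (by simp [h])
  have hab : ∀ i i' : Fin m, a i - b i' ≠ 0 := fun i i' =>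
    key (.inl (.inl i)) (.inl (.inr i')) (by simp)
  have hba : ∀ i i' : Fin m, b i - a i' ≠ 0 := fun i i' =>
    key (.inl (.inr i)) (.inl (.inl i')) (by simp)
  have hcd : ∀ j j' : Fin n, c j - d j' ≠ 0 := fun j j' =>
    key (.inr (.inl j)) (.inr (.inr j')) (by simp)
  have hdc : ∀ j j' : Fin n, d j - c j' ≠ 0 := fun j j' =>
    key (.inr (.inr j)) (.inr (.inl j')) (by simp)
  have hac : ∀ (i : Fin m) (j : Fin n), a i - c j ≠ 0 := fun i j =>
    key (.inl (.inl i)) (.inr (.inl j)) (by simp)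
  have had : ∀ (i : Fin m) (j : Fin n), a i - d j ≠ 0 := fun i j =>
    key (.inl (.inl i)) (.inr (.inr j)) (by simp)
  have hbc : ∀ (i : Fin m) (j : Fin n), b i - c j ≠ 0 := fun i j =>
    key (.inl (.inr i)) (.inr (.inl j)) (by simp)
  have hbd : ∀ (i : Fin m) (j : Fin n), b i - d j ≠ 0 := fun i j =>
    key (.inl (.inr i)) (.inr (.inr j)) (by simp)
  -- nonzeroness of the atomic products
  have PA : (∏ i, ∏ i' ∈ univ.erase i, (a i - a i')) ≠ 0 :=
    Finset.prod_ne_zero_iff.mpr fun i _ => Finset.prod_ne_zero_iff.mpr fun i' hi' =>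
      haa i i' (Ne.symm (Finset.ne_of_mem_erase hi'))
  have PB : (∏ i, ∏ i' ∈ univ.erase i, (b i - b i')) ≠ 0 :=
    Finset.prod_ne_zero_iff.mpr fun i _ => Finset.prod_ne_zero_iff.mpr fun i' hi' =>
      hbb i i' (Ne.symm (Finset.ne_of_mem_erase hi'))
  have PC : (∏ j, ∏ j' ∈ univ.erase j, (c j - c j')) ≠ 0 :=
    Finset.prod_ne_zero_iff.mpr fun j _ => Finset.prod_ne_zero_iff.mpr fun j' hj' =>
      hcc j j' (Ne.symm (Finset.ne_of_mem_erase hj'))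
  have PD : (∏ j, ∏ j' ∈ univ.erase j, (d j - d j')) ≠ 0 :=
    Finset.prod_ne_zero_iff.mpr fun j _ => Finset.prod_ne_zero_iff.mpr fun j' hj' =>
      hdd j j' (Ne.symm (Finset.ne_of_mem_erase hj'))
  have Pab : (∏ i, ∏ i', (a i - b i')) ≠ 0 :=
    Finset.prod_ne_zero_iff.mpr fun i _ => Finset.prod_ne_zero_iff.mpr fun i' _ => hab i i'
  have Pba : (∏ i, ∏ i', (b i - a i')) ≠ 0 :=
    Finset.prod_ne_zero_iff.mpr fun i _ => Finset.prod_ne_zero_iff.mpr fun i' _ => hba i i'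
  have Pcd : (∏ j, ∏ j', (c j - d j')) ≠ 0 :=
    Finset.prod_ne_zero_iff.mpr fun j _ => Finset.prod_ne_zero_iff.mpr fun j' _ => hcd j j'
  have Pdc : (∏ j, ∏ j', (d j - c j')) ≠ 0 :=
    Finset.prod_ne_zero_iff.mpr fun j _ => Finset.prod_ne_zero_iff.mpr fun j' _ => hdc j j'
  have Pac : (∏ i, ∏ j, (a i - c j)) ≠ 0 :=
    Finset.prod_ne_zero_iff.mpr fun i _ => Finset.prod_ne_zero_iff.mpr fun j _ => hac i j
  have Pad : (∏ i, ∏ j, (a i - d j)) ≠ 0 :=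
    Finset.prod_ne_zero_iff.mpr fun i _ => Finset.prod_ne_zero_iff.mpr fun j _ => had i j
  have Pbc : (∏ i, ∏ j, (b i - c j)) ≠ 0 :=
    Finset.prod_ne_zero_iff.mpr fun i _ => Finset.prod_ne_zero_iff.mpr fun j _ => hbc i j
  have Pbd : (∏ i, ∏ j, (b i - d j)) ≠ 0 :=
    Finset.prod_ne_zero_iff.mpr fun i _ => Finset.prod_ne_zero_iff.mpr fun j _ => hbd i j
  -- rewrite LHS as quotient of products
  have hL : (∏ i, ∏ j, ((a i - c j) * (b i - d j)) / ((a i - d j) * (b i - c j))) =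
      ((∏ i, ∏ j, (a i - c j)) * ∏ i, ∏ j, (b i - d j)) /
        ((∏ i, ∏ j, (a i - d j)) * ∏ i, ∏ j, (b i - c j)) := by
    simp_rw [Finset.prod_div_distrib, Finset.prod_mul_distrib]
  rw [hL]
  -- expand the discriminants
  simp only [disExpr, Fintype.prod_sum_type, erase_inl_univ, erase_inr_univ,
    Finset.prod_disjSum, Sum.elim_inl, Sum.elim_inr, Finset.prod_mul_distrib]
  -- swap lemmas
  rw [prod_sub_swap a c, prod_sub_swap b d, prod_sub_swap b c, prod_sub_swap a d]
  have hs : ((-1 : ℂ) ^ n) ^ m ≠ 0 :=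
    pow_ne_zero _ (pow_ne_zero _ (neg_ne_zero.mpr one_ne_zero))
  set A := ∏ i, ∏ i' ∈ univ.erase i, (a i - a i') with hA
  set B := ∏ i, ∏ i' ∈ univ.erase i, (b i - b i') with hB
  set C := ∏ j, ∏ j' ∈ univ.erase j, (c j - c j') with hC
  set D := ∏ j, ∏ j' ∈ univ.erase j, (d j - d j') with hD
  set pab := ∏ i, ∏ i', (a i - b i') with hpab
  set pba := ∏ i, ∏ i', (b i - a i') with hpba
  set pcd := ∏ j, ∏ j', (c j - d j') with hpcd
  set pdc := ∏ j, ∏ j', (d j - c j') with hpdc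
  set pac := ∏ i, ∏ j, (a i - c j) with hpac
  set pad := ∏ i, ∏ j, (a i - d j) with hpad
  set pbc := ∏ i, ∏ j, (b i - c j) with hpbc
  set pbd := ∏ i, ∏ j, (b i - d j) with hpbd
  set s := ((-1 : ℂ) ^ n) ^ m with hsdef
  field_simp
end
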